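/- arXiv:1711.06901 — 2 statements merged into one kernel-verified Lean document; each statement's English description precedes it below -/
import Mathlib

section
/- Let F be an entire function such that for every A > 0 there is a constant C(A) with |F(z)| ≤ C(A)·exp(π|z|²/2 − A|z|) for all z ∈ ℂ. Then the closure in 𝓕 of the linear span of {e_λ·F : λ ∈ ℂ} equals [F]_𝓕. -/
open MeasureTheory Complex Filter Metric Set

noncomputable section

/-- Squared norm in the Fock space `𝓕`. -/
def fockNormSq (f : ℂ → ℂ) : ENNReal :=
  ∫⁻ z : ℂ, ENNReal.ofReal (‖f z‖ ^ 2 * Real.exp (-Real.pi * ‖z‖ ^ 2))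

/-- Membership in the Fock space `𝓕`. -/
def MemFock (f : ℂ → ℂ) : Prop :=
  Differentiable ℂ f ∧ fockNormSq f < ⊤

/-- Membership in the Fock space `𝓕_(α)`. -/
def MemFockA (α : ℝ) (f : ℂ → ℂ) : Prop :=
  Differentiable ℂ f ∧
    (∫⁻ z : ℂ, ENNReal.ofReal (‖f z‖ ^ 2 * Real.exp (-(α * Real.pi) * ‖z‖ ^ 2))) < ⊤

/-- The Fock space inner product `⟨f, g⟩`. -/
def fockInner (f g : ℂ → ℂ) : ℂ :=
  ∫ z : ℂ, f z * (starRingEnd ℂ) (g z) * (Real.exp (-Real.pi * ‖z‖ ^ 2) : ℝ)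

/-- Membership in `𝓕₀ = {F entire : pF ∈ 𝓕 for every polynomial p}`. -/
def MemFock0 (f : ℂ → ℂ) : Prop :=
  Differentiable ℂ f ∧ ∀ p : Polynomial ℂ, MemFock fun z => p.eval z * f z

/-- `H` belongs to `[F]_𝓕`, the closure in `𝓕` of the polynomial multiples of `F`. -/
def InPolyClosure (F H : ℂ → ℂ) : Prop :=
  MemFock H ∧ ∀ ε : ℝ, 0 < ε → ∃ p : Polynomial ℂ,
    fockNormSq (fun z => p.eval z * F z - H z) < ENNReal.ofReal (ε ^ 2)

/-- `H` belongs to the closure in `𝓕` of the span of `{e_λ F : λ ∈ ℂ}`. -/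
def InExpClosure (F H : ℂ → ℂ) : Prop :=
  MemFock H ∧ ∀ ε : ℝ, 0 < ε → ∃ (n : ℕ) (c lam : Fin n → ℂ),
    fockNormSq (fun z => (∑ i : Fin n, c i * Complex.exp (lam i * z)) * F z - H z)
      < ENNReal.ofReal (ε ^ 2)

/-- The class `𝓔_{2,α}` of entire functions of type at most `α` for order `2`. -/
def MemE2 (α : ℝ) (F : ℂ → ℂ) : Prop :=
  Differentiable ℂ F ∧
    Filter.limsup (fun z : ℂ => Real.log ‖F z‖ / ‖z‖ ^ 2) (Bornology.cobounded ℂ) ≤ α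

/-- The class `𝓔₂ = ∪_{α<∞} 𝓔_{2,α}`. -/
def MemE2' (F : ℂ → ℂ) : Prop := ∃ α : ℝ, MemE2 α F

/-- The indicator function of `F` for order `2`. -/
def indicator2 (F : ℂ → ℂ) (θ : ℝ) : ℝ :=
  Filter.limsup
    (fun r : ℝ => Real.log ‖F ((r : ℂ) * Complex.exp ((θ : ℂ) * Complex.I))‖ / r ^ 2)
    Filter.atTop

/-- Completely regular growth for order `2`. -/
def CRG (F : ℂ → ℂ) : Prop :=
  ∃ E : Set ℝ, MeasurableSet E ∧ E ⊆ Set.Ici (0 : ℝ) ∧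
    Filter.Tendsto (fun R : ℝ => (volume (E ∩ Set.Icc 0 R)).toReal / R)
      Filter.atTop (nhds 0) ∧
    ∀ ε : ℝ, 0 < ε → ∃ R₀ : ℝ, ∀ r : ℝ, R₀ ≤ r → r ∉ E →
      ∀ θ ∈ Set.Icc (0 : ℝ) (2 * Real.pi),
        |Real.log ‖F ((r : ℂ) * Complex.exp ((θ : ℂ) * Complex.I))‖ / r ^ 2
          - indicator2 F θ| < ε

/-- The maximum modulus of `h` on the circle of radius `r`. -/
def maxModulus (h : ℂ → ℂ) (r : ℝ) : ℝ :=
  sSup ((fun z => ‖h z‖) '' Metric.sphere (0 : ℂ) r)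

/-- `h` has order at most `α`. -/
def OrderAtMost (h : ℂ → ℂ) (α : ℝ) : Prop :=
  Filter.limsup (fun r : ℝ => Real.log (Real.log (maxModulus h r)) / Real.log r)
    Filter.atTop ≤ α

/-- The lattice `𝒵 = ℤ + iℤ`. -/
def latticeZ : Set ℂ := {z : ℂ | ∃ m n : ℤ, z = (m : ℂ) + (n : ℂ) * Complex.I}

/-- `𝒵₀ = 𝒵 ∖ {0}`. -/
def latticeZ0 : Set ℂ := latticeZ \ {0}

/-- `σ₀(z) = σ(z)/z` where `σ` is the Weierstrass sigma function of the lattice `𝒵`. -/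
def sigma0 (z : ℂ) : ℂ :=
  ∏' w : latticeZ0,
    (1 - z / (w : ℂ)) * Complex.exp (z / (w : ℂ) + z ^ 2 / (2 * (w : ℂ) ^ 2))

/-- The Weierstrass sigma function of the lattice `𝒵`. -/
def weierstrassSigma (z : ℂ) : ℂ := z * sigma0 z

/-- Thin subsets of `ℂ`. -/
def IsThin (Ω : Set ℂ) : Prop :=
  ∃ Ω₁ Ω₂ : Set ℂ, MeasurableSet Ω₁ ∧ MeasurableSet Ω₂ ∧ Ω = Ω₁ ∪ Ω₂ ∧
    Filter.Tendsto (fun R : ℝ => (volume (Ω₁ ∩ Metric.ball (0 : ℂ) R)).toReal / R ^ 2)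
      Filter.atTop (nhds 0) ∧
    (∫⁻ z in Ω₂, ENNReal.ofReal (1 / ((‖z‖ + 1) ^ 2 * Real.log (‖z‖ + 2)))) < ⊤

/-- Lattice thin subsets of `𝒵`. -/
def LatticeThin (A : Set ℂ) : Prop :=
  A ⊆ latticeZ ∧ ∀ c : ℝ, 0 < c → IsThin (⋃ w ∈ A, Metric.ball w c)

/-- The function `𝓘(F₁, F₂)`. -/
def calI (F₁ F₂ : ℂ → ℂ) (z : ℂ) : ℂ :=
  (∫ ζ : ℂ, F₂ ζ * (starRingEnd ℂ) (F₁ ζ) / (z - ζ) * (Real.exp (-Real.pi * ‖ζ‖ ^ 2) : ℝ)) -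
  F₂ z / sigma0 z *
    ∫ ζ : ℂ, sigma0 ζ * (starRingEnd ℂ) (F₁ ζ) / (z - ζ) * (Real.exp (-Real.pi * ‖ζ‖ ^ 2) : ℝ)

end



noncomputable section Aux

/-- exponential-sum predicate -/
def IsExpSum (g : ℂ → ℂ) : Prop :=
  ∃ (n : ℕ) (c lam : Fin n → ℂ), ∀ z, g z = ∑ i : Fin n, c i * Complex.exp (lam i * z)

lemma isExpSum_const (a : ℂ) : IsExpSum fun _ => a := by
  refine ⟨1, ![a], ![0], fun z => ?_⟩
  simp

lemma isExpSum_exp (l : ℂ) : IsExpSum fun z => Complex.exp (l * z) := by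
  refine ⟨1, ![1], ![l], fun z => ?_⟩
  simp

lemma IsExpSum.add {g h : ℂ → ℂ} (hg : IsExpSum g) (hh : IsExpSum h) :
    IsExpSum fun z => g z + h z := by
  obtain ⟨n₁, c₁, l₁, h₁⟩ := hg
  obtain ⟨n₂, c₂, l₂, h₂⟩ := hh
  refine ⟨n₁ + n₂, Fin.append c₁ c₂, Fin.append l₁ l₂, fun z => ?_⟩
  show g z + h z = _
  rw [h₁ z, h₂ z, Fin.sum_univ_add]
  simp

lemma IsExpSum.mul {g h : ℂ → ℂ} (hg : IsExpSum g) (hh : IsExpSum h) :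
    IsExpSum fun z => g z * h z := by
  obtain ⟨n₁, c₁, l₁, h₁⟩ := hg
  obtain ⟨n₂, c₂, l₂, h₂⟩ := hh
  refine ⟨n₁ * n₂, fun k => c₁ (finProdFinEquiv.symm k).1 * c₂ (finProdFinEquiv.symm k).2,
    fun k => l₁ (finProdFinEquiv.symm k).1 + l₂ (finProdFinEquiv.symm k).2, fun z => ?_⟩
  show g z * h z = _
  rw [h₁ z, h₂ z, Finset.sum_mul_sum]
  have heq := Fintype.sum_equiv (finProdFinEquiv (m := n₁) (n := n₂)).symm
    (fun k : Fin (n₁ * n₂) => (c₁ (finProdFinEquiv.symm k).1 * c₂ (finProdFinEquiv.symm k).2) *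
      Complex.exp ((l₁ (finProdFinEquiv.symm k).1 + l₂ (finProdFinEquiv.symm k).2) * z))
    (fun p : Fin n₁ × Fin n₂ => (c₁ p.1 * c₂ p.2) * Complex.exp ((l₁ p.1 + l₂ p.2) * z))
    (fun k => by simp)
  rw [heq, Fintype.sum_prod_type]
  exact Finset.sum_congr rfl fun i _ => Finset.sum_congr rfl fun j _ => by
    rw [add_mul, Complex.exp_add]; ring

lemma IsExpSum.const_mul {g : ℂ → ℂ} (hg : IsExpSum g) (a : ℂ) :
    IsExpSum fun z => a * g z := (isExpSum_const a).mul hg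

lemma IsExpSum.sub {g h : ℂ → ℂ} (hg : IsExpSum g) (hh : IsExpSum h) :
    IsExpSum fun z => g z - h z := by
  have := hg.add ((hh.const_mul (-1)))
  simpa [sub_eq_add_neg] using this

lemma IsExpSum.pow {g : ℂ → ℂ} (hg : IsExpSum g) (k : ℕ) :
    IsExpSum fun z => g z ^ k := by
  induction k with
  | zero => simpa using isExpSum_const 1
  | succ k ih => simpa [pow_succ] using ih.mul hg

lemma isExpSum_sum {ι : Type*} (s : Finset ι) (f : ι → ℂ → ℂ)
    (hf : ∀ i ∈ s, IsExpSum (f i)) : IsExpSum fun z => ∑ i ∈ s, f i z := by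
  induction s using Finset.cons_induction with
  | empty => simpa using isExpSum_const 0
  | cons i s hi ih =>
    simp only [Finset.sum_cons]
    exact (hf i (Finset.mem_cons_self i s)).add
      (ih fun j hj => hf j (Finset.mem_cons_of_mem hj))

end Aux


noncomputable section Aux2

def fockNormSq' (f : ℂ → ℂ) : ENNReal :=
  ∫⁻ z : ℂ, ENNReal.ofReal (‖f z‖ ^ 2 * Real.exp (-Real.pi * ‖z‖ ^ 2))

lemma self_le_exp (t : ℝ) : t ≤ Real.exp t := by linarith [Real.add_one_le_exp t]

lemma cont_weight : Continuous fun z : ℂ => Real.exp (-Real.pi * ‖z‖ ^ 2) :=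
  Real.continuous_exp.comp (continuous_const.mul (continuous_norm.pow 2))

lemma meas_aux {f : ℂ → ℂ} (hf : Continuous f) :
    Measurable fun z : ℂ => ENNReal.ofReal (‖f z‖ ^ 2 * Real.exp (-Real.pi * ‖z‖ ^ 2)) :=
  (ENNReal.continuous_ofReal.comp ((hf.norm.pow 2).mul cont_weight)).measurable

/-- mean value bound for complex exp -/
lemma norm_cexp_sub_one_le (w : ℂ) : ‖Complex.exp w - 1‖ ≤ ‖w‖ * Real.exp ‖w‖ := by
  have h : ∀ x ∈ Metric.closedBall (0 : ℂ) ‖w‖,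
      HasDerivWithinAt Complex.exp (Complex.exp x) (Metric.closedBall (0 : ℂ) ‖w‖) x :=
    fun x _ => (Complex.hasDerivAt_exp x).hasDerivWithinAt
  have hb : ∀ x ∈ Metric.closedBall (0 : ℂ) ‖w‖, ‖Complex.exp x‖ ≤ Real.exp ‖w‖ := by
    intro x hx
    rw [Complex.norm_exp]
    refine Real.exp_le_exp.2 ((Complex.re_le_norm x).trans ?_)
    simpa using mem_closedBall_zero_iff.1 hx
  have := (convex_closedBall (0:ℂ) ‖w‖).norm_image_sub_le_of_norm_hasDerivWithin_le h hb
    (mem_closedBall_self (norm_nonneg w)) (mem_closedBall_zero_iff.2 le_rfl)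
  simpa [Complex.exp_zero, mul_comm] using this

lemma norm_cexp_le (w : ℂ) : ‖Complex.exp w‖ ≤ Real.exp ‖w‖ := by
  rw [Complex.norm_exp]
  exact Real.exp_le_exp.2 ((Complex.re_le_norm w).trans (by simp))

lemma norm_partial_exp_le (w : ℂ) (N : ℕ) :
    ‖∑ k ∈ Finset.range N, w ^ k / (Nat.factorial k : ℂ)‖ ≤ Real.exp ‖w‖ := by
  refine (norm_sum_le _ _).trans ?_
  have h : ∀ k, ‖w ^ k / (Nat.factorial k : ℂ)‖ = ‖w‖ ^ k / (Nat.factorial k : ℝ) := fun k => by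
    rw [norm_div, norm_pow]
    norm_num
  simp_rw [h]
  exact Real.sum_le_exp_of_nonneg (norm_nonneg w) N

lemma pow_le_exp_of_le {t : ℝ} (ht : 0 ≤ t) {k d : ℕ} (hkd : k ≤ d) :
    t ^ k ≤ Real.exp (d * t) := by
  calc t ^ k ≤ Real.exp t ^ k := pow_le_pow_left₀ ht (self_le_exp t) k
    _ = Real.exp (k * t) := by rw [← Real.exp_nat_mul]
    _ ≤ Real.exp (d * t) := Real.exp_le_exp.2 (by
        have h : (k : ℝ) ≤ d := Nat.cast_le.2 hkd
        nlinarith)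

/-- finiteness of the dominating integral -/
lemma lintegral_dom_lt_top (K : ℝ) :
    (∫⁻ z : ℂ, ENNReal.ofReal (K * Real.exp (-3 * ‖z‖))) < ⊤ := by
  have hint : Integrable (fun z : ℂ => |K| * (1 + ‖z‖) ^ (-(3:ℝ))) volume := by
    refine (integrable_one_add_norm ?_).const_mul |K|
    rw [Complex.finrank_real_complex]; norm_num
  refine lt_of_le_of_lt (lintegral_mono fun z => ?_) hint.lintegral_lt_top
  apply ENNReal.ofReal_le_ofReal
  have h1 : Real.exp (-3 * ‖z‖) ≤ (1 + ‖z‖) ^ (-(3:ℝ)) := by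
    have hrp : (1 + ‖z‖) ^ (-(3:ℝ)) = ((1 + ‖z‖) ^ (3:ℕ))⁻¹ := by
      rw [← Real.rpow_natCast (1 + ‖z‖) 3, ← Real.rpow_neg (by positivity)]
      norm_num
    rw [hrp, show (-3 : ℝ) * ‖z‖ = -(3 * ‖z‖) by ring, Real.exp_neg]
    refine inv_anti₀ (by positivity) ?_
    calc (1 + ‖z‖) ^ (3:ℕ) ≤ Real.exp ‖z‖ ^ (3:ℕ) := by
          refine pow_le_pow_left₀ (by positivity) ?_ 3
          linarith [Real.add_one_le_exp ‖z‖]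
      _ = Real.exp (3 * ‖z‖) := by rw [← Real.exp_nat_mul]; norm_num
  calc K * Real.exp (-3 * ‖z‖) ≤ |K| * Real.exp (-3 * ‖z‖) := by
        have := Real.exp_pos (-3 * ‖z‖); nlinarith [le_abs_self K]
    _ ≤ |K| * (1 + ‖z‖) ^ (-(3:ℝ)) := mul_le_mul_of_nonneg_left h1 (abs_nonneg K)

/-- dominated convergence for the Fock norm -/
lemma fock_tendsto_zero {g : ℕ → ℂ → ℂ} (hg : ∀ n, Continuous (g n)) (K : ℝ)
    (hdom : ∀ n z, ‖g n z‖ ^ 2 * Real.exp (-Real.pi * ‖z‖ ^ 2) ≤ K * Real.exp (-3 * ‖z‖))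
    (hlim : ∀ z, Tendsto (fun n => g n z) atTop (nhds 0)) :
    Tendsto (fun n => fockNormSq' (g n)) atTop (nhds 0) := by
  have h := tendsto_lintegral_of_dominated_convergence (μ := (volume : Measure ℂ))
    (F := fun n z => ENNReal.ofReal (‖g n z‖ ^ 2 * Real.exp (-Real.pi * ‖z‖ ^ 2)))
    (f := fun _ => 0)
    (fun z => ENNReal.ofReal (K * Real.exp (-3 * ‖z‖)))
    (fun n => meas_aux (hg n))
    (fun n => Eventually.of_forall fun z => ENNReal.ofReal_le_ofReal (hdom n z))
    (lintegral_dom_lt_top K).ne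
    (Eventually.of_forall fun z => ?_)
  · rw [lintegral_zero] at h
    exact h
  · have h1 : Tendsto (fun n => ‖g n z‖ ^ 2 * Real.exp (-Real.pi * ‖z‖ ^ 2)) atTop (nhds 0) := by
      have := ((hlim z).norm.pow 2).mul_const (Real.exp (-Real.pi * ‖z‖ ^ 2))
      simpa using this
    simpa using ENNReal.tendsto_ofReal h1

/-- combining two estimates -/
lemma fock_combine {a b : ℂ → ℂ} (ha : Continuous a) (hb : Continuous b) {ε : ℝ} (hε : 0 < ε)
    (h1 : fockNormSq' a < ENNReal.ofReal ((ε / 2) ^ 2))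
    (h2 : fockNormSq' b < ENNReal.ofReal ((ε / 2) ^ 2)) :
    fockNormSq' (fun z => a z + b z) < ENNReal.ofReal (ε ^ 2) := by
  have hofr : ∀ x : ℝ, 0 ≤ x → ENNReal.ofReal (2 * x) = 2 * ENNReal.ofReal x := fun x hx => by
    rw [ENNReal.ofReal_mul (by norm_num)]; norm_num
  have hpt : ∀ z : ℂ, ENNReal.ofReal (‖a z + b z‖ ^ 2 * Real.exp (-Real.pi * ‖z‖ ^ 2)) ≤
      2 * ENNReal.ofReal (‖a z‖ ^ 2 * Real.exp (-Real.pi * ‖z‖ ^ 2)) +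
      2 * ENNReal.ofReal (‖b z‖ ^ 2 * Real.exp (-Real.pi * ‖z‖ ^ 2)) := by
    intro z
    have hw : (0:ℝ) < Real.exp (-Real.pi * ‖z‖ ^ 2) := Real.exp_pos _
    have h2ab : ‖a z + b z‖ ^ 2 ≤ 2 * ‖a z‖ ^ 2 + 2 * ‖b z‖ ^ 2 := by
      have h := norm_add_le (a z) (b z)
      have hsq := mul_self_le_mul_self (norm_nonneg (a z + b z)) h
      nlinarith [sq_nonneg (‖a z‖ - ‖b z‖)]
    have hineq : ‖a z + b z‖ ^ 2 * Real.exp (-Real.pi * ‖z‖ ^ 2) ≤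
        2 * (‖a z‖ ^ 2 * Real.exp (-Real.pi * ‖z‖ ^ 2)) +
        2 * (‖b z‖ ^ 2 * Real.exp (-Real.pi * ‖z‖ ^ 2)) := by
      nlinarith [mul_le_mul_of_nonneg_right h2ab hw.le]
    refine (ENNReal.ofReal_le_ofReal hineq).trans (le_of_eq ?_)
    rw [ENNReal.ofReal_add (by positivity) (by positivity),
      hofr _ (by positivity), hofr _ (by positivity)]
  calc fockNormSq' (fun z => a z + b z) ≤
      ∫⁻ z : ℂ, (2 * ENNReal.ofReal (‖a z‖ ^ 2 * Real.exp (-Real.pi * ‖z‖ ^ 2)) +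
        2 * ENNReal.ofReal (‖b z‖ ^ 2 * Real.exp (-Real.pi * ‖z‖ ^ 2))) :=
      lintegral_mono hpt
    _ = 2 * fockNormSq' a + 2 * fockNormSq' b := by
        rw [lintegral_add_left ((meas_aux ha).const_mul 2), lintegral_const_mul 2 (meas_aux ha),
          lintegral_const_mul 2 (meas_aux hb)]
        rfl
    _ < 2 * ENNReal.ofReal ((ε / 2) ^ 2) + 2 * ENNReal.ofReal ((ε / 2) ^ 2) :=
        ENNReal.add_lt_add
          (ENNReal.mul_lt_mul_right (by norm_num) (by norm_num) h1)
          (ENNReal.mul_lt_mul_right (by norm_num) (by norm_num) h2)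
    _ = ENNReal.ofReal (ε ^ 2) := by
        rw [← hofr _ (by positivity), ← ENNReal.ofReal_add (by positivity) (by positivity)]
        congr 1
        ring

/-- the key exponent combination -/
lemma exp_prod_bound {M C0 L t : ℝ} (ht : 0 ≤ t) (hM : 0 ≤ M) (hC0 : 0 ≤ C0) {X Y : ℝ}
    (hX0 : 0 ≤ X) (hX : X ≤ M * Real.exp (L * t)) (hY0 : 0 ≤ Y)
    (hY : Y ≤ C0 * Real.exp (Real.pi * t ^ 2 / 2 - (L + 2) * t)) :
    (X * Y) ^ 2 * Real.exp (-Real.pi * t ^ 2) ≤ M ^ 2 * C0 ^ 2 * Real.exp (-3 * t) := by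
  set b := Real.pi * t ^ 2 / 2 - (L + 2) * t with hbdef
  have key : (M * Real.exp (L * t) * (C0 * Real.exp b)) ^ 2 * Real.exp (-Real.pi * t ^ 2) =
      M ^ 2 * C0 ^ 2 * Real.exp (-4 * t) := by
    have expand : (M * Real.exp (L * t) * (C0 * Real.exp b)) ^ 2 * Real.exp (-Real.pi * t ^ 2) =
        M ^ 2 * C0 ^ 2 *
          (Real.exp (L * t) * Real.exp (L * t) * (Real.exp b * Real.exp b) *
            Real.exp (-Real.pi * t ^ 2)) := by ring
    rw [expand, ← Real.exp_add, ← Real.exp_add, ← Real.exp_add, ← Real.exp_add]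
    congr 1
    rw [hbdef]
    ring
  have hXY : X * Y ≤ M * Real.exp (L * t) * (C0 * Real.exp b) :=
    mul_le_mul hX hY hY0 (by positivity)
  calc (X * Y) ^ 2 * Real.exp (-Real.pi * t ^ 2) ≤
      (M * Real.exp (L * t) * (C0 * Real.exp b)) ^ 2 * Real.exp (-Real.pi * t ^ 2) :=
      mul_le_mul_of_nonneg_right (pow_le_pow_left₀ (mul_nonneg hX0 hY0) hXY 2) (Real.exp_pos _).le
    _ = M ^ 2 * C0 ^ 2 * Real.exp (-4 * t) := key
    _ ≤ M ^ 2 * C0 ^ 2 * Real.exp (-3 * t) :=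
      mul_le_mul_of_nonneg_left (Real.exp_le_exp.2 (by linarith)) (by positivity)

end Aux2


noncomputable section Aux3

lemma approx_exp_by_poly (F : ℂ → ℂ) (hFc : Continuous F)
    (hgrowth : ∀ A : ℝ, 0 < A → ∃ C : ℝ, ∀ z : ℂ,
      ‖F z‖ ≤ C * Real.exp (Real.pi * ‖z‖ ^ 2 / 2 - A * ‖z‖))
    (n : ℕ) (c lam : Fin n → ℂ) {δ : ℝ} (hδ : 0 < δ) :
    ∃ p : Polynomial ℂ,
      fockNormSq' (fun z =>
        (Polynomial.eval z p - ∑ i : Fin n, c i * Complex.exp (lam i * z)) * F z) <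
      ENNReal.ofReal δ := by
  set L : ℝ := ∑ i : Fin n, ‖lam i‖ with hLdef
  have hL0 : 0 ≤ L := Finset.sum_nonneg fun i _ => norm_nonneg _
  have hLi : ∀ i, ‖lam i‖ ≤ L := fun i =>
    Finset.single_le_sum (fun j _ => norm_nonneg (lam j)) (Finset.mem_univ i)
  obtain ⟨C, hC⟩ := hgrowth (L + 2) (by linarith)
  set C0 : ℝ := max C 0 with hC0def
  have hC0 : ∀ z, ‖F z‖ ≤ C0 * Real.exp (Real.pi * ‖z‖ ^ 2 / 2 - (L + 2) * ‖z‖) := fun z =>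
    (hC z).trans (mul_le_mul_of_nonneg_right (le_max_left _ _) (Real.exp_pos _).le)
  set M : ℝ := ∑ i : Fin n, 2 * ‖c i‖ with hMdef
  have hM0 : 0 ≤ M := Finset.sum_nonneg fun i _ => by positivity
  set P : ℕ → Polynomial ℂ := fun N => ∑ i : Fin n, Polynomial.C (c i) *
    ∑ k ∈ Finset.range N, Polynomial.C ((lam i) ^ k / (Nat.factorial k : ℂ)) *
      Polynomial.X ^ k with hPdef
  have hPeval : ∀ N z, Polynomial.eval z (P N) =
      ∑ i : Fin n, c i * ∑ k ∈ Finset.range N, (lam i * z) ^ k / (Nat.factorial k : ℂ) := by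
    intro N z
    rw [hPdef]
    simp only [Polynomial.eval_finset_sum, Polynomial.eval_mul, Polynomial.eval_C,
      Polynomial.eval_pow, Polynomial.eval_X]
    refine Finset.sum_congr rfl fun i _ => ?_
    congr 1
    refine Finset.sum_congr rfl fun k _ => ?_
    rw [mul_pow]
    ring
  set g : ℕ → ℂ → ℂ := fun N z =>
    (Polynomial.eval z (P N) - ∑ i : Fin n, c i * Complex.exp (lam i * z)) * F z with hgdef
  have hScont : Continuous fun z : ℂ => ∑ i : Fin n, c i * Complex.exp (lam i * z) :=
    continuous_finset_sum _ fun i _ => continuous_const.mul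
      (Complex.continuous_exp.comp (continuous_const.mul continuous_id))
  have hg : ∀ N, Continuous (g N) := fun N =>
    (((P N).continuous_aeval.sub hScont).mul hFc)
  have hdom : ∀ N z, ‖g N z‖ ^ 2 * Real.exp (-Real.pi * ‖z‖ ^ 2) ≤
      (M ^ 2 * C0 ^ 2) * Real.exp (-3 * ‖z‖) := by
    intro N z
    rw [hgdef]
    simp only [norm_mul]
    refine exp_prod_bound (norm_nonneg z) hM0 (le_max_right C 0)
      (norm_nonneg _) ?_ (norm_nonneg _) (hC0 z)
    rw [hPeval, ← Finset.sum_sub_distrib, hMdef, Finset.sum_mul]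
    refine (norm_sum_le _ _).trans (Finset.sum_le_sum fun i _ => ?_)
    rw [← mul_sub, norm_mul]
    have h3 : ‖lam i * z‖ ≤ L * ‖z‖ := by
      rw [norm_mul]
      exact mul_le_mul_of_nonneg_right (hLi i) (norm_nonneg z)
    have hterm : ‖(∑ k ∈ Finset.range N, (lam i * z) ^ k / (Nat.factorial k : ℂ)) -
        Complex.exp (lam i * z)‖ ≤ 2 * Real.exp (L * ‖z‖) := by
      refine (norm_sub_le _ _).trans ?_
      have h1 := norm_partial_exp_le (lam i * z) N
      have h2 := norm_cexp_le (lam i * z)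
      have h4 := Real.exp_le_exp.2 h3
      linarith
    calc ‖c i‖ * ‖_‖ ≤ ‖c i‖ * (2 * Real.exp (L * ‖z‖)) :=
        mul_le_mul_of_nonneg_left hterm (norm_nonneg _)
      _ = 2 * ‖c i‖ * Real.exp (L * ‖z‖) := by ring
  have hlim : ∀ z, Tendsto (fun N => g N z) atTop (nhds 0) := by
    intro z
    have hsum : Tendsto (fun N => Polynomial.eval z (P N)) atTop
        (nhds (∑ i : Fin n, c i * Complex.exp (lam i * z))) := by
      simp only [hPeval]
      refine tendsto_finset_sum _ fun i _ => Tendsto.const_mul (c i) ?_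
      have hs := (NormedSpace.expSeries_div_hasSum_exp (lam i * z)).tendsto_sum_nat
      rw [← Complex.exp_eq_exp_ℂ] at hs
      exact hs
    have := (hsum.sub (tendsto_const_nhds (x := ∑ i : Fin n, c i * Complex.exp (lam i * z)))).mul_const (F z)
    simpa [hgdef] using this
  have h0 := fock_tendsto_zero hg (M ^ 2 * C0 ^ 2) hdom hlim
  obtain ⟨N, hN⟩ := (h0.eventually_lt_const (ENNReal.ofReal_pos.2 hδ)).exists
  exact ⟨P N, hN⟩

lemma approx_poly_by_exp (F : ℂ → ℂ) (hFc : Continuous F)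
    (hgrowth : ∀ A : ℝ, 0 < A → ∃ C : ℝ, ∀ z : ℂ,
      ‖F z‖ ≤ C * Real.exp (Real.pi * ‖z‖ ^ 2 / 2 - A * ‖z‖))
    (p : Polynomial ℂ) {δ : ℝ} (hδ : 0 < δ) :
    ∃ (n : ℕ) (c lam : Fin n → ℂ),
      fockNormSq' (fun z =>
        ((∑ i : Fin n, c i * Complex.exp (lam i * z)) - Polynomial.eval z p) * F z) <
      ENNReal.ofReal δ := by
  set d : ℕ := p.natDegree with hddef
  set L : ℝ := 2 * d with hLdef
  have hL0 : 0 ≤ L := by positivity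
  obtain ⟨C, hC⟩ := hgrowth (L + 2) (by linarith)
  set C0 : ℝ := max C 0 with hC0def
  have hC0 : ∀ z, ‖F z‖ ≤ C0 * Real.exp (Real.pi * ‖z‖ ^ 2 / 2 - (L + 2) * ‖z‖) := fun z =>
    (hC z).trans (mul_le_mul_of_nonneg_right (le_max_left _ _) (Real.exp_pos _).le)
  set M : ℝ := ∑ k ∈ Finset.range (d + 1), 2 * ‖p.coeff k‖ with hMdef
  have hM0 : 0 ≤ M := Finset.sum_nonneg fun k _ => by positivity
  set ψ : ℕ → ℂ → ℂ := fun m z =>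
    (Complex.exp (((m : ℂ) + 1)⁻¹ * z) - 1) * ((m : ℂ) + 1) with hψdef
  set q : ℕ → ℂ → ℂ := fun m z =>
    ∑ k ∈ Finset.range (d + 1), p.coeff k * (ψ m z) ^ k with hqdef
  have hm1 : ∀ m : ℕ, ((m : ℂ) + 1) ≠ 0 := fun m => Nat.cast_add_one_ne_zero m
  have hnorm : ∀ m : ℕ, ‖((m : ℂ) + 1)‖ = (m : ℝ) + 1 := fun m => by
    rw [show ((m : ℂ) + 1) = ((m + 1 : ℕ) : ℂ) by push_cast; ring, Complex.norm_natCast]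
    push_cast; ring
  -- each q m is an exponential sum
  have hq_exp : ∀ m, IsExpSum (q m) := by
    intro m
    refine isExpSum_sum _ _ fun k _ => ?_
    have h1 : IsExpSum (ψ m) := by
      rw [hψdef]
      exact ((isExpSum_exp _).sub (isExpSum_const 1)).mul (isExpSum_const _)
    exact (h1.pow k).const_mul (p.coeff k)
  set g : ℕ → ℂ → ℂ := fun m z => (q m z - Polynomial.eval z p) * F z with hgdef
  have hψc : ∀ m, Continuous (ψ m) := fun m =>
    ((Complex.continuous_exp.comp (continuous_const.mul continuous_id)).sub
      continuous_const).mul continuous_const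
  have hg : ∀ m, Continuous (g m) := fun m =>
    ((continuous_finset_sum _ fun k _ => continuous_const.mul ((hψc m).pow k)).sub
      p.continuous_aeval).mul hFc
  -- uniform bound on ψ
  have hψbound : ∀ m z, ‖ψ m z‖ ≤ ‖z‖ * Real.exp ‖z‖ := by
    intro m z
    rw [hψdef]
    simp only [norm_mul]
    rw [hnorm m]
    have h1 := norm_cexp_sub_one_le (((m : ℂ) + 1)⁻¹ * z)
    have hwn : ‖((m : ℂ) + 1)⁻¹ * z‖ = ((m : ℝ) + 1)⁻¹ * ‖z‖ := by
      rw [norm_mul, norm_inv, hnorm m]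
    have hminv : (0:ℝ) < ((m : ℝ) + 1)⁻¹ := by positivity
    have hle1 : ((m : ℝ) + 1)⁻¹ ≤ 1 := by
      rw [inv_le_one_iff₀]; right; linarith [Nat.cast_nonneg (α := ℝ) m]
    calc ‖Complex.exp (((m : ℂ) + 1)⁻¹ * z) - 1‖ * ((m : ℝ) + 1) ≤
        (((m : ℝ) + 1)⁻¹ * ‖z‖ * Real.exp (((m : ℝ) + 1)⁻¹ * ‖z‖)) * ((m : ℝ) + 1) := by
          refine mul_le_mul_of_nonneg_right ?_ (by positivity)
          rw [← hwn]
          exact h1.trans (by rw [hwn])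
      _ = ‖z‖ * Real.exp (((m : ℝ) + 1)⁻¹ * ‖z‖) * (((m : ℝ) + 1)⁻¹ * ((m : ℝ) + 1)) := by ring
      _ = ‖z‖ * Real.exp (((m : ℝ) + 1)⁻¹ * ‖z‖) := by
          rw [inv_mul_cancel₀ (by positivity), mul_one]
      _ ≤ ‖z‖ * Real.exp ‖z‖ := by
          refine mul_le_mul_of_nonneg_left (Real.exp_le_exp.2 ?_) (norm_nonneg z)
          nlinarith [norm_nonneg z]
  have hdom : ∀ m z, ‖g m z‖ ^ 2 * Real.exp (-Real.pi * ‖z‖ ^ 2) ≤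
      (M ^ 2 * C0 ^ 2) * Real.exp (-3 * ‖z‖) := by
    intro m z
    rw [hgdef]
    simp only [norm_mul]
    refine exp_prod_bound (norm_nonneg z) hM0 (le_max_right C 0)
      (norm_nonneg _) ?_ (norm_nonneg _) (hC0 z)
    rw [hqdef]
    show ‖(∑ k ∈ Finset.range (d + 1), p.coeff k * (ψ m z) ^ k) - Polynomial.eval z p‖ ≤ _
    rw [Polynomial.eval_eq_sum_range, ← hddef, ← Finset.sum_sub_distrib, hMdef, Finset.sum_mul]
    refine (norm_sum_le _ _).trans (Finset.sum_le_sum fun k hk => ?_)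
    rw [← mul_sub, norm_mul]
    have hkd : k ≤ d := Nat.lt_succ_iff.mp (Finset.mem_range.mp hk)
    have hzk : ‖z‖ ^ k ≤ Real.exp (d * ‖z‖) := pow_le_exp_of_le (norm_nonneg z) hkd
    have hψk : ‖(ψ m z) ^ k‖ ≤ Real.exp (L * ‖z‖) := by
      rw [norm_pow]
      calc ‖ψ m z‖ ^ k ≤ (‖z‖ * Real.exp ‖z‖) ^ k :=
          pow_le_pow_left₀ (norm_nonneg _) (hψbound m z) k
        _ = ‖z‖ ^ k * Real.exp ‖z‖ ^ k := mul_pow _ _ k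
        _ ≤ Real.exp (d * ‖z‖) * Real.exp (d * ‖z‖) := by
            refine mul_le_mul hzk ?_ (by positivity) (Real.exp_pos _).le
            rw [← Real.exp_nat_mul]
            refine Real.exp_le_exp.2 ?_
            have : (k:ℝ) ≤ d := Nat.cast_le.2 hkd
            nlinarith [norm_nonneg z]
        _ = Real.exp (L * ‖z‖) := by rw [← Real.exp_add, hLdef]; congr 1; ring
    have hterm : ‖(ψ m z) ^ k - z ^ k‖ ≤ 2 * Real.exp (L * ‖z‖) := by
      refine (norm_sub_le _ _).trans ?_
      have h2 : ‖z ^ k‖ ≤ Real.exp (L * ‖z‖) := by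
        rw [norm_pow]
        refine hzk.trans (Real.exp_le_exp.2 ?_)
        rw [hLdef]
        nlinarith [norm_nonneg z, Nat.cast_nonneg (α := ℝ) d]
      linarith
    calc ‖p.coeff k‖ * ‖(ψ m z) ^ k - z ^ k‖ ≤ ‖p.coeff k‖ * (2 * Real.exp (L * ‖z‖)) :=
        mul_le_mul_of_nonneg_left hterm (norm_nonneg _)
      _ = 2 * ‖p.coeff k‖ * Real.exp (L * ‖z‖) := by ring
  -- pointwise convergence of ψ
  have hψlim : ∀ z, Tendsto (fun m => ψ m z) atTop (nhds z) := by
    intro z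
    have hder : HasDerivAt (fun w : ℂ => Complex.exp (w * z)) z 0 := by
      have h := ((hasDerivAt_id (0 : ℂ)).mul_const z).cexp
      simpa using h
    have hslope := hasDerivAt_iff_tendsto_slope.mp hder
    have hseqR : Tendsto (fun m : ℕ => ((m : ℝ) + 1)⁻¹) atTop (nhds 0) := by
      simpa [one_div] using tendsto_one_div_add_atTop_nhds_zero_nat (𝕜 := ℝ)
    have hseqC : Tendsto (fun m : ℕ => ((m : ℂ) + 1)⁻¹) atTop (nhdsWithin (0:ℂ) {(0:ℂ)}ᶜ) := by
      refine tendsto_nhdsWithin_of_tendsto_nhds_of_eventually_within _ ?_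
        (Eventually.of_forall fun m => ?_)
      · rw [tendsto_zero_iff_norm_tendsto_zero]
        simp only [norm_inv, hnorm]
        simpa [one_div] using tendsto_one_div_add_atTop_nhds_zero_nat (𝕜 := ℝ)
      · exact inv_ne_zero (hm1 m)
    have hcomp := hslope.comp hseqC
    have hψeq : ∀ m : ℕ, slope (fun w : ℂ => Complex.exp (w * z)) 0 (((m : ℂ) + 1)⁻¹) =
        ψ m z := by
      intro m
      rw [slope_def_field, hψdef]
      rw [zero_mul, Complex.exp_zero, sub_zero, div_eq_mul_inv, inv_inv]
    have : (fun m : ℕ => slope (fun w : ℂ => Complex.exp (w * z)) 0 (((m : ℂ) + 1)⁻¹)) =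
        fun m => ψ m z := funext hψeq
    rw [← this]
    exact hcomp
  have hlim : ∀ z, Tendsto (fun m => g m z) atTop (nhds 0) := by
    intro z
    have hq_lim : Tendsto (fun m => q m z) atTop (nhds (Polynomial.eval z p)) := by
      rw [hqdef]
      rw [Polynomial.eval_eq_sum_range (x := z), ← hddef]
      exact tendsto_finset_sum _ fun k _ =>
        Tendsto.const_mul (p.coeff k) ((hψlim z).pow k)
    have := (hq_lim.sub (tendsto_const_nhds (x := Polynomial.eval z p))).mul_const (F z)
    simpa [hgdef] using this
  have h0 := fock_tendsto_zero hg (M ^ 2 * C0 ^ 2) hdom hlim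
  obtain ⟨m, hm⟩ := (h0.eventually_lt_const (ENNReal.ofReal_pos.2 hδ)).exists
  obtain ⟨n, c, lam, hrep⟩ := hq_exp m
  refine ⟨n, c, lam, ?_⟩
  have heq : (fun z => ((∑ i : Fin n, c i * Complex.exp (lam i * z)) - Polynomial.eval z p) * F z)
      = g m := by
    funext z
    rw [hgdef]
    show _ = (q m z - Polynomial.eval z p) * F z
    rw [hrep z]
  rw [heq]
  exact hm

end Aux3

theorem exp_span_eq_poly_span (F : ℂ → ℂ) (hF : Differentiable ℂ F)
    (hgrowth : ∀ A : ℝ, 0 < A → ∃ C : ℝ, ∀ z : ℂ,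
      ‖F z‖ ≤ C * Real.exp (Real.pi * ‖z‖ ^ 2 / 2 - A * ‖z‖)) :
    ∀ H : ℂ → ℂ, InExpClosure F H ↔ InPolyClosure F H := by
  intro H
  have hFc : Continuous F := hF.continuous
  have hfn : ∀ f : ℂ → ℂ, fockNormSq f = fockNormSq' f := fun f => rfl
  constructor
  · rintro ⟨hH, happ⟩
    have hHc : Continuous H := hH.1.continuous
    refine ⟨hH, fun ε hε => ?_⟩
    obtain ⟨n, c, lam, hNear⟩ := happ (ε / 2) (by positivity)
    obtain ⟨p, hp⟩ := approx_exp_by_poly F hFc hgrowth n c lam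
      (δ := (ε / 2) ^ 2) (by positivity)
    refine ⟨p, ?_⟩
    have hScont : Continuous fun z : ℂ => ∑ i : Fin n, c i * Complex.exp (lam i * z) :=
      continuous_finset_sum _ fun i _ => continuous_const.mul
        (Complex.continuous_exp.comp (continuous_const.mul continuous_id))
    have hcomb := fock_combine
      (a := fun z => (Polynomial.eval z p - ∑ i : Fin n, c i * Complex.exp (lam i * z)) * F z)
      (b := fun z => (∑ i : Fin n, c i * Complex.exp (lam i * z)) * F z - H z)
      ((p.continuous_aeval.sub hScont).mul hFc)
      ((hScont.mul hFc).sub hHc) hε hp (by rw [← hfn]; exact hNear)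
    rw [hfn]
    have heq : (fun z => Polynomial.eval z p * F z - H z) =
        fun z => ((Polynomial.eval z p - ∑ i : Fin n, c i * Complex.exp (lam i * z)) * F z) +
          ((∑ i : Fin n, c i * Complex.exp (lam i * z)) * F z - H z) := by
      funext z; ring
    rw [heq]
    exact hcomb
  · rintro ⟨hH, happ⟩
    have hHc : Continuous H := hH.1.continuous
    refine ⟨hH, fun ε hε => ?_⟩
    obtain ⟨p, hNear⟩ := happ (ε / 2) (by positivity)
    obtain ⟨n, c, lam, hp⟩ := approx_poly_by_exp F hFc hgrowth p
      (δ := (ε / 2) ^ 2) (by positivity)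
    refine ⟨n, c, lam, ?_⟩
    have hScont : Continuous fun z : ℂ => ∑ i : Fin n, c i * Complex.exp (lam i * z) :=
      continuous_finset_sum _ fun i _ => continuous_const.mul
        (Complex.continuous_exp.comp (continuous_const.mul continuous_id))
    have hcomb := fock_combine
      (a := fun z => ((∑ i : Fin n, c i * Complex.exp (lam i * z)) - Polynomial.eval z p) * F z)
      (b := fun z => Polynomial.eval z p * F z - H z)
      ((hScont.sub p.continuous_aeval).mul hFc)
      ((p.continuous_aeval.mul hFc).sub hHc) hε hp (by rw [← hfn]; exact hNear)
    rw [hfn]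
    have heq : (fun z => (∑ i : Fin n, c i * Complex.exp (lam i * z)) * F z - H z) =
        fun z => (((∑ i : Fin n, c i * Complex.exp (lam i * z)) - Polynomial.eval z p) * F z) +
          (Polynomial.eval z p * F z - H z) := by
      funext z; ring
    rw [heq]
    exact hcomb
end

section
/- Let F ∈ 𝓕₀ and let H ∈ 𝓔₂ be of completely regular growth with inf_{θ∈[0,2π]} h_H(θ) > 0, such that H has only simple zeros, the zero sets of F and H are disjoint, and F·H ∈ [F]_𝓕. Let W be an entire function with F·W ∈ 𝓕 and ⟨pF, FW⟩ = 0 for every polynomial p. Then for every z ∈ ℂ one has H(z)·∫_ℂ F(ζ)·conj(F(ζ)W(ζ))/(z−ζ) dν(ζ) = ∫_ℂ F(ζ)H(ζ)·conj(F(ζ)W(ζ))/(z−ζ) dν(ζ). -/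
open MeasureTheory Complex Filter Metric Set

noncomputable section

section MyHelpers

theorem my_lintegral_comp_polarCoord_symm (f : ℝ × ℝ → ENNReal) :
    (∫⁻ p in polarCoord.target, ENNReal.ofReal p.1 * f (polarCoord.symm p)) = ∫⁻ p, f p := by
  simpa only [smul_eq_mul] using lintegral_comp_polarCoord_symm f

theorem my_complex_lintegral_comp_polarCoord_symm (f : ℂ → ENNReal) :
    (∫⁻ p in polarCoord.target, ENNReal.ofReal p.1 * f (Complex.polarCoord.symm p)) = ∫⁻ z, f z := by
  have h := Complex.volume_preserving_equiv_real_prod.symm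
  rw [← h.lintegral_comp_emb measurableEquivRealProd.symm.measurableEmbedding,
    ← my_lintegral_comp_polarCoord_symm]
  rfl

theorem my_meanvalue (g : ℂ → ℂ) (hg : Differentiable ℂ g) (c : ℂ) (r : ℝ) (hr : 0 < r) :
    (∫ t in (0:ℝ)..(2*Real.pi), g (circleMap c r t)) = ((2*Real.pi : ℝ) : ℂ) * g c := by
  have h := (hg.diffContOnCl (s := Metric.ball c r)).circleIntegral_sub_inv_smul
    (Metric.mem_ball_self hr)
  rw [circleIntegral] at h
  simp only [deriv_circleMap, circleMap_sub_center, smul_eq_mul] at h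
  have h2 : ∀ t : ℝ, circleMap 0 r t * I * ((circleMap 0 r t)⁻¹ * g (circleMap c r t))
      = I * g (circleMap c r t) := by
    intro t
    have hne : circleMap 0 r t ≠ 0 := circleMap_ne_center hr.ne'
    field_simp [hne]
  simp only [h2] at h
  rw [intervalIntegral.integral_const_mul] at h
  apply mul_left_cancel₀ I_ne_zero
  rw [h]
  push_cast
  ring

theorem my_meanvalue_sq (g : ℂ → ℂ) (hg : Differentiable ℂ g) (c : ℂ) (r : ℝ) (hr : 0 < r) :
    2 * Real.pi * ‖g c‖ ^ 2 ≤ ∫ t in (0:ℝ)..(2*Real.pi), ‖g (circleMap c r t)‖ ^ 2 := by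
  have h := my_meanvalue (fun ζ => g ζ * g ζ) (hg.mul hg) c r hr
  have hb : ‖((2*Real.pi : ℝ) : ℂ) * (g c * g c)‖ = 2 * Real.pi * ‖g c‖ ^ 2 := by
    rw [norm_mul, norm_mul, Complex.norm_real, Real.norm_eq_abs,
      abs_of_pos (by positivity : (0:ℝ) < 2 * Real.pi)]
    ring
  calc 2 * Real.pi * ‖g c‖ ^ 2 = ‖((2*Real.pi : ℝ) : ℂ) * (g c * g c)‖ := hb.symm
    _ = ‖∫ t in (0:ℝ)..(2*Real.pi), g (circleMap c r t) * g (circleMap c r t)‖ := by rw [h]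
    _ ≤ ∫ t in (0:ℝ)..(2*Real.pi), ‖g (circleMap c r t) * g (circleMap c r t)‖ :=
        intervalIntegral.norm_integral_le_integral_norm (by positivity)
    _ = ∫ t in (0:ℝ)..(2*Real.pi), ‖g (circleMap c r t)‖ ^ 2 := by
        congr 1; funext t; rw [norm_mul]; ring

theorem my_circle_lintegral (g : ℂ → ℂ) (hg : Differentiable ℂ g) (c : ℂ) (r : ℝ) (hr : 0 < r) :
    ENNReal.ofReal (2 * Real.pi * ‖g c‖ ^ 2)
      ≤ ∫⁻ θ in Ioo (-Real.pi) Real.pi, ENNReal.ofReal (‖g (circleMap c r θ)‖ ^ 2) := by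
  set X : ℝ → ℝ := fun θ => ‖g (circleMap c r θ)‖ ^ 2 with hX
  have hXc : Continuous X := ((hg.continuous.comp (continuous_circleMap c r)).norm.pow 2)
  have hXint : IntegrableOn X (Ioo (-Real.pi) Real.pi) :=
    (hXc.integrableOn_Icc).mono_set Ioo_subset_Icc_self
  have hper : Function.Periodic X (2 * Real.pi) := fun θ => by
    simp only [hX, periodic_circleMap c r θ]
  have key : 2 * Real.pi * ‖g c‖ ^ 2 ≤ ∫ θ in Ioo (-Real.pi) Real.pi, X θ := by
    have h1 : ∫ θ in Ioo (-Real.pi) Real.pi, X θ = ∫ θ in (-Real.pi)..Real.pi, X θ := by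
      rw [intervalIntegral.integral_of_le (by linarith [Real.pi_pos]),
        integral_Ioc_eq_integral_Ioo]
    have h2 : ∫ θ in (-Real.pi)..Real.pi, X θ = ∫ θ in (0:ℝ)..(2*Real.pi), X θ := by
      have := hper.intervalIntegral_add_eq (-Real.pi) 0
      simpa [(by ring : -Real.pi + 2*Real.pi = Real.pi)] using this
    rw [h1, h2]
    exact my_meanvalue_sq g hg c r hr
  calc ENNReal.ofReal (2 * Real.pi * ‖g c‖ ^ 2)
      ≤ ENNReal.ofReal (∫ θ in Ioo (-Real.pi) Real.pi, X θ) := ENNReal.ofReal_le_ofReal key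
    _ = ∫⁻ θ in Ioo (-Real.pi) Real.pi, ENNReal.ofReal (X θ) := by
        rw [← ofReal_integral_eq_lintegral_ofReal hXint
          (Filter.Eventually.of_forall fun θ => by positivity)]

theorem my_eval_sq_le (g : ℂ → ℂ) (hg : Differentiable ℂ g) (w : ℂ) :
    ENNReal.ofReal (Real.pi * ‖g w‖ ^ 2)
      ≤ ∫⁻ ζ in Metric.ball w 1, ENNReal.ofReal (‖g ζ‖ ^ 2) := by
  have hsym : ∀ p : ℝ × ℝ, (w + Complex.polarCoord.symm p) = circleMap w p.1 p.2 := by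
    intro p
    simp only [Complex.polarCoord_symm_apply, circleMap, Complex.exp_mul_I, ← Complex.ofReal_cos,
      ← Complex.ofReal_sin]
  set f : ℂ → ENNReal := fun x => (Metric.ball (0:ℂ) 1).indicator
    (fun x => ENNReal.ofReal (‖g (w + x)‖ ^ 2)) x with hf
  have hmem : ∀ x : ℂ, (w + x ∈ Metric.ball w 1) ↔ x ∈ Metric.ball (0:ℂ) 1 := by
    intro x; simp [Metric.mem_ball, dist_eq_norm]
  have step1 : (∫⁻ ζ in Metric.ball w 1, ENNReal.ofReal (‖g ζ‖ ^ 2)) = ∫⁻ x, f x := by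
    rw [← lintegral_indicator Metric.isOpen_ball.measurableSet]
    rw [← lintegral_add_left_eq_self
      (fun ζ => (Metric.ball w 1).indicator (fun ζ => ENNReal.ofReal (‖g ζ‖ ^ 2)) ζ) w]
    congr 1
    funext x
    simp only [hf]
    by_cases hx : x ∈ Metric.ball (0:ℂ) 1
    · rw [Set.indicator_of_mem hx, Set.indicator_of_mem ((hmem x).2 hx)]
    · rw [Set.indicator_of_notMem hx, Set.indicator_of_notMem (fun h => hx ((hmem x).1 h))]
  rw [step1, ← my_complex_lintegral_comp_polarCoord_symm f]
  set rect : Set (ℝ × ℝ) := Ioo (0:ℝ) 1 ×ˢ Ioo (-Real.pi) Real.pi with hrect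
  have hsub : rect ⊆ polarCoord.target := by
    rintro ⟨r, θ⟩ ⟨hr, hθ⟩
    exact ⟨hr.1, hθ⟩
  refine le_trans ?_ (lintegral_mono_set hsub)
  have hcm : Continuous (fun p : ℝ × ℝ => circleMap w p.1 p.2) := by
    unfold circleMap
    continuity
  have hcont : Measurable (fun p : ℝ × ℝ =>
      ENNReal.ofReal p.1 * ENNReal.ofReal (‖g (circleMap w p.1 p.2)‖ ^ 2)) := by
    refine Measurable.mul (f := fun p : ℝ × ℝ => ENNReal.ofReal p.1)
      (g := fun p : ℝ × ℝ => ENNReal.ofReal (‖g (circleMap w p.1 p.2)‖ ^ 2)) ?_ ?_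
    · exact ENNReal.measurable_ofReal.comp measurable_fst
    · exact ENNReal.measurable_ofReal.comp
        (((hg.continuous.comp hcm).norm.pow 2).measurable)
  have hhalf : (∫⁻ r in Ioo (0:ℝ) 1, ENNReal.ofReal r) = ENNReal.ofReal (1/2) := by
    have hint : IntegrableOn (fun x : ℝ => x) (Ioo (0:ℝ) 1) := by
      refine IntegrableOn.mono_set ?_ (Ioo_subset_Icc_self (a := (0:ℝ)) (b := 1))
      exact Continuous.integrableOn_Icc (by continuity)
    rw [← ofReal_integral_eq_lintegral_ofReal hint
      ((ae_restrict_iff' measurableSet_Ioo).2 (Filter.Eventually.of_forall fun x hx => hx.1.le))]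
    congr 1
    rw [← integral_Ioc_eq_integral_Ioo, ← intervalIntegral.integral_of_le zero_le_one,
      integral_id]
    norm_num
  calc ENNReal.ofReal (Real.pi * ‖g w‖ ^ 2)
      = ENNReal.ofReal (1/2) * ENNReal.ofReal (2 * Real.pi * ‖g w‖ ^ 2) := by
        rw [← ENNReal.ofReal_mul (by norm_num)]
        congr 1
        ring
    _ = (∫⁻ r in Ioo (0:ℝ) 1, ENNReal.ofReal r) * ENNReal.ofReal (2 * Real.pi * ‖g w‖ ^ 2) := by
        rw [hhalf]
    _ = ∫⁻ r in Ioo (0:ℝ) 1, ENNReal.ofReal r * ENNReal.ofReal (2 * Real.pi * ‖g w‖ ^ 2) := by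
        rw [lintegral_mul_const' _ _ ENNReal.ofReal_ne_top]
    _ ≤ ∫⁻ r in Ioo (0:ℝ) 1,
          ∫⁻ θ in Ioo (-Real.pi) Real.pi,
            ENNReal.ofReal r * ENNReal.ofReal (‖g (circleMap w r θ)‖ ^ 2) := by
        refine setLIntegral_mono' measurableSet_Ioo fun r hr => ?_
        rw [lintegral_const_mul' _ _ ENNReal.ofReal_ne_top]
        exact mul_le_mul_right (my_circle_lintegral g hg w r hr.1) _
    _ = ∫⁻ p in rect, ENNReal.ofReal p.1 * ENNReal.ofReal (‖g (circleMap w p.1 p.2)‖ ^ 2) := by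
        rw [hrect, Measure.volume_eq_prod, ← Measure.prod_restrict,
          lintegral_prod _ hcont.aemeasurable]
    _ = ∫⁻ p in rect, ENNReal.ofReal p.1 * f (Complex.polarCoord.symm p) := by
        refine setLIntegral_congr_fun (measurableSet_Ioo.prod measurableSet_Ioo) ?_
        rintro ⟨r, θ⟩ ⟨hr, hθ⟩
        have hb : Complex.polarCoord.symm (r, θ) ∈ Metric.ball (0:ℂ) 1 := by
          simp only [Metric.mem_ball, dist_zero_right,
            Complex.norm_polarCoord_symm, abs_of_pos hr.1]
          exact hr.2
        simp only [hf, Set.indicator_of_mem hb, hsym (r, θ)]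

theorem my_eval_fock (g : ℂ → ℂ) (hg : Differentiable ℂ g) (w : ℂ) :
    ENNReal.ofReal (Real.pi * ‖g w‖ ^ 2 * Real.exp (-Real.pi * (‖w‖ + 1) ^ 2))
      ≤ fockNormSq g := by
  have hptw : ∀ ζ ∈ Metric.ball w 1,
      ENNReal.ofReal (Real.exp (-Real.pi * (‖w‖ + 1) ^ 2)) * ENNReal.ofReal (‖g ζ‖ ^ 2)
        ≤ ENNReal.ofReal (‖g ζ‖ ^ 2 * Real.exp (-Real.pi * ‖ζ‖ ^ 2)) := by
    intro ζ hζ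
    rw [← ENNReal.ofReal_mul (Real.exp_pos _).le]
    apply ENNReal.ofReal_le_ofReal
    have hζn : ‖ζ‖ ≤ ‖w‖ + 1 := by
      have := mem_ball_iff_norm.1 hζ
      calc ‖ζ‖ = ‖w + (ζ - w)‖ := by ring_nf
        _ ≤ ‖w‖ + ‖ζ - w‖ := norm_add_le _ _
        _ ≤ ‖w‖ + 1 := by linarith
    have hexp : Real.exp (-Real.pi * (‖w‖ + 1) ^ 2) ≤ Real.exp (-Real.pi * ‖ζ‖ ^ 2) := by
      apply Real.exp_le_exp.2
      have h1 : ‖ζ‖ ^ 2 ≤ (‖w‖ + 1) ^ 2 := by nlinarith [norm_nonneg ζ, norm_nonneg w]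
      nlinarith [Real.pi_pos]
    calc Real.exp (-Real.pi * (‖w‖ + 1) ^ 2) * ‖g ζ‖ ^ 2
        ≤ Real.exp (-Real.pi * ‖ζ‖ ^ 2) * ‖g ζ‖ ^ 2 := by nlinarith [sq_nonneg ‖g ζ‖]
      _ = ‖g ζ‖ ^ 2 * Real.exp (-Real.pi * ‖ζ‖ ^ 2) := by ring
  calc ENNReal.ofReal (Real.pi * ‖g w‖ ^ 2 * Real.exp (-Real.pi * (‖w‖ + 1) ^ 2))
      = ENNReal.ofReal (Real.exp (-Real.pi * (‖w‖ + 1) ^ 2))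
          * ENNReal.ofReal (Real.pi * ‖g w‖ ^ 2) := by
        rw [← ENNReal.ofReal_mul (Real.exp_pos _).le]
        congr 1
        ring
    _ ≤ ENNReal.ofReal (Real.exp (-Real.pi * (‖w‖ + 1) ^ 2))
          * ∫⁻ ζ in Metric.ball w 1, ENNReal.ofReal (‖g ζ‖ ^ 2) :=
        mul_le_mul_right (my_eval_sq_le g hg w) _
    _ = ∫⁻ ζ in Metric.ball w 1,
          ENNReal.ofReal (Real.exp (-Real.pi * (‖w‖ + 1) ^ 2)) * ENNReal.ofReal (‖g ζ‖ ^ 2) := by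
        rw [lintegral_const_mul' _ _ ENNReal.ofReal_ne_top]
    _ ≤ ∫⁻ ζ in Metric.ball w 1,
          ENNReal.ofReal (‖g ζ‖ ^ 2 * Real.exp (-Real.pi * ‖ζ‖ ^ 2)) :=
        setLIntegral_mono' Metric.isOpen_ball.measurableSet hptw
    _ ≤ fockNormSq g := lintegral_mono' Measure.restrict_le_self le_rfl

theorem my_eval_ball (g : ℂ → ℂ) (hg : Differentiable ℂ g) (z : ℂ)
    (hfin : fockNormSq g ≠ ⊤) :
    ∀ w ∈ Metric.closedBall z 1,
      ‖g w‖ ≤ Real.sqrt (Real.exp (Real.pi * (‖z‖ + 2) ^ 2) / Real.pi)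
        * Real.sqrt (fockNormSq g).toReal := by
  intro w hw
  set t := (fockNormSq g).toReal with ht
  have ht0 : 0 ≤ t := ENNReal.toReal_nonneg
  have h1 : Real.pi * ‖g w‖ ^ 2 * Real.exp (-Real.pi * (‖w‖ + 1) ^ 2) ≤ t :=
    (ENNReal.ofReal_le_iff_le_toReal hfin).1 (my_eval_fock g hg w)
  have hwz : ‖w‖ + 1 ≤ ‖z‖ + 2 := by
    have := mem_closedBall_iff_norm.1 hw
    calc ‖w‖ + 1 = ‖z + (w - z)‖ + 1 := by ring_nf
      _ ≤ ‖z‖ + ‖w - z‖ + 1 := by linarith [norm_add_le z (w - z)]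
      _ ≤ ‖z‖ + 2 := by linarith
  have h2 : ‖g w‖ ^ 2 ≤ Real.exp (Real.pi * (‖w‖ + 1) ^ 2) / Real.pi * t := by
    have he : Real.exp (-Real.pi * (‖w‖ + 1) ^ 2)
        = (Real.exp (Real.pi * (‖w‖ + 1) ^ 2))⁻¹ := by
      rw [← Real.exp_neg]
      ring_nf
    rw [he] at h1
    have hep := Real.exp_pos (Real.pi * (‖w‖ + 1) ^ 2)
    rw [div_mul_eq_mul_div, le_div_iff₀ Real.pi_pos]
    calc ‖g w‖ ^ 2 * Real.pi
        = (Real.pi * ‖g w‖ ^ 2 * (Real.exp (Real.pi * (‖w‖ + 1) ^ 2))⁻¹)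
            * Real.exp (Real.pi * (‖w‖ + 1) ^ 2) := by
          field_simp
      _ ≤ t * Real.exp (Real.pi * (‖w‖ + 1) ^ 2) := by
          apply mul_le_mul_of_nonneg_right h1 hep.le
      _ = Real.exp (Real.pi * (‖w‖ + 1) ^ 2) * t := by ring
  have h3 : ‖g w‖ ^ 2 ≤ Real.exp (Real.pi * (‖z‖ + 2) ^ 2) / Real.pi * t := by
    refine h2.trans ?_
    gcongr
  calc ‖g w‖ = Real.sqrt (‖g w‖ ^ 2) := by rw [Real.sqrt_sq (norm_nonneg _)]
    _ ≤ Real.sqrt (Real.exp (Real.pi * (‖z‖ + 2) ^ 2) / Real.pi * t) := Real.sqrt_le_sqrt h3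
    _ = Real.sqrt (Real.exp (Real.pi * (‖z‖ + 2) ^ 2) / Real.pi) * Real.sqrt t :=
        Real.sqrt_mul (by positivity) t

def rho (ζ : ℂ) : ℝ := Real.exp (-Real.pi * ‖ζ‖ ^ 2)

def Jint (v : ℂ → ℂ) (z : ℂ) (g : ℂ → ℂ) (ζ : ℂ) : ℂ :=
  g ζ * (starRingEnd ℂ) (v ζ) / (z - ζ) * (rho ζ : ℝ)

theorem rho_continuous : Continuous rho := by
  unfold rho
  continuity

theorem rho_pos (ζ : ℂ) : 0 < rho ζ := Real.exp_pos _

theorem rho_le_one (ζ : ℂ) : rho ζ ≤ 1 := by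
  rw [rho, ← Real.exp_zero]
  apply Real.exp_le_exp.2
  nlinarith [Real.pi_pos, sq_nonneg ‖ζ‖]

theorem Jint_norm (v : ℂ → ℂ) (z : ℂ) (g : ℂ → ℂ) (ζ : ℂ) :
    ‖Jint v z g ζ‖ = ‖g ζ‖ * ‖v ζ‖ / ‖z - ζ‖ * rho ζ := by
  rw [Jint, norm_mul, norm_div, norm_mul, Complex.norm_real, Real.norm_eq_abs,
    abs_of_pos (rho_pos ζ), RCLike.norm_conj]

theorem Jint_aesm (v : ℂ → ℂ) (hv : Continuous v) (z : ℂ) (g : ℂ → ℂ) (hg : Continuous g) :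
    AEStronglyMeasurable (Jint v z g) volume := by
  apply Measurable.aestronglyMeasurable
  apply Measurable.mul
  · apply Measurable.div
    · exact (hg.measurable).mul (Complex.continuous_conj.measurable.comp hv.measurable)
    · exact measurable_const.sub measurable_id
  · exact Complex.measurable_ofReal.comp (by
      apply Measurable.comp Real.measurable_exp
      exact (measurable_const.mul ((measurable_norm.pow_const 2))))

theorem sqrho_mul (ζ : ℂ) (a : ℝ) : (a * Real.sqrt (rho ζ)) ^ 2 = a ^ 2 * rho ζ := by
  rw [mul_pow, Real.sq_sqrt (rho_pos ζ).le]

theorem far_bound (g v : ℂ → ℂ) (hg : Continuous g) (hv : Continuous v) (z : ℂ) :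
    (∫⁻ ζ in (Metric.ball z 1)ᶜ, ENNReal.ofReal (‖Jint v z g ζ‖))
      ≤ (fockNormSq g) ^ ((1:ℝ)/2) * (fockNormSq v) ^ ((1:ℝ)/2) := by
  have hptw : ∀ ζ ∈ (Metric.ball z 1)ᶜ, ENNReal.ofReal (‖Jint v z g ζ‖)
      ≤ ENNReal.ofReal (‖g ζ‖ * Real.sqrt (rho ζ)) * ENNReal.ofReal (‖v ζ‖ * Real.sqrt (rho ζ)) := by
    intro ζ hζ
    have h1 : (1:ℝ) ≤ ‖z - ζ‖ := by
      have := Metric.mem_ball.not.1 hζ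
      rw [dist_comm] at this
      simpa [dist_eq_norm] using not_lt.1 this
    rw [← ENNReal.ofReal_mul (by positivity)]
    apply ENNReal.ofReal_le_ofReal
    rw [Jint_norm]
    have h2 : ‖g ζ‖ * ‖v ζ‖ / ‖z - ζ‖ ≤ ‖g ζ‖ * ‖v ζ‖ := by
      apply div_le_self (by positivity) h1
    calc ‖g ζ‖ * ‖v ζ‖ / ‖z - ζ‖ * rho ζ ≤ ‖g ζ‖ * ‖v ζ‖ * rho ζ := by
          nlinarith [rho_pos ζ]
      _ = ‖g ζ‖ * Real.sqrt (rho ζ) * (‖v ζ‖ * Real.sqrt (rho ζ)) := by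
          have hss : Real.sqrt (rho ζ) * Real.sqrt (rho ζ) = rho ζ :=
            Real.mul_self_sqrt (rho_pos ζ).le
          linear_combination (‖g ζ‖ * ‖v ζ‖) * hss.symm
  calc (∫⁻ ζ in (Metric.ball z 1)ᶜ, ENNReal.ofReal (‖Jint v z g ζ‖))
      ≤ ∫⁻ ζ in (Metric.ball z 1)ᶜ, ENNReal.ofReal (‖g ζ‖ * Real.sqrt (rho ζ))
          * ENNReal.ofReal (‖v ζ‖ * Real.sqrt (rho ζ)) :=
        setLIntegral_mono' Metric.isOpen_ball.measurableSet.compl hptw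
    _ ≤ ∫⁻ ζ, ENNReal.ofReal (‖g ζ‖ * Real.sqrt (rho ζ))
          * ENNReal.ofReal (‖v ζ‖ * Real.sqrt (rho ζ)) :=
        lintegral_mono' Measure.restrict_le_self le_rfl
    _ ≤ (∫⁻ ζ, ENNReal.ofReal (‖g ζ‖ * Real.sqrt (rho ζ)) ^ (2:ℝ)) ^ ((1:ℝ)/2)
          * (∫⁻ ζ, ENNReal.ofReal (‖v ζ‖ * Real.sqrt (rho ζ)) ^ (2:ℝ)) ^ ((1:ℝ)/2) := by
        have hpq : Real.HolderConjugate 2 2 := Real.HolderConjugate.two_two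
        have hmg : AEMeasurable (fun ζ => ENNReal.ofReal (‖g ζ‖ * Real.sqrt (rho ζ))) volume :=
          (ENNReal.measurable_ofReal.comp
            ((hg.norm.mul (Real.continuous_sqrt.comp rho_continuous)).measurable)).aemeasurable
        have hmv : AEMeasurable (fun ζ => ENNReal.ofReal (‖v ζ‖ * Real.sqrt (rho ζ))) volume :=
          (ENNReal.measurable_ofReal.comp
            ((hv.norm.mul (Real.continuous_sqrt.comp rho_continuous)).measurable)).aemeasurable
        exact ENNReal.lintegral_mul_le_Lp_mul_Lq volume hpq hmg hmv
    _ = (fockNormSq g) ^ ((1:ℝ)/2) * (fockNormSq v) ^ ((1:ℝ)/2) := by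
        have key : ∀ (u : ℂ → ℂ), (∫⁻ ζ, ENNReal.ofReal (‖u ζ‖ * Real.sqrt (rho ζ)) ^ (2:ℝ))
            = fockNormSq u := by
          intro u
          apply lintegral_congr
          intro ζ
          rw [ENNReal.rpow_two, ← ENNReal.ofReal_pow (by positivity), sqrho_mul, rho]
        rw [key g, key v]

theorem kernel_lint (z : ℂ) :
    (∫⁻ ζ in Metric.ball z 1, ENNReal.ofReal (1 / ‖z - ζ‖)) < ⊤ := by
  set k : ℂ → ENNReal := fun ζ => (Metric.ball z 1).indicator
    (fun ζ => ENNReal.ofReal (1 / ‖z - ζ‖)) ζ with hk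
  have step1 : (∫⁻ ζ in Metric.ball z 1, ENNReal.ofReal (1 / ‖z - ζ‖)) = ∫⁻ x, k (z + x) := by
    rw [← lintegral_indicator Metric.isOpen_ball.measurableSet, ← hk,
      lintegral_add_left_eq_self k z]
  have step2 : ∀ x : ℂ, k (z + x)
      = (Metric.ball (0:ℂ) 1).indicator (fun x => ENNReal.ofReal (1 / ‖x‖)) x := by
    intro x
    have hm : z + x ∈ Metric.ball z 1 ↔ x ∈ Metric.ball (0:ℂ) 1 := by
      simp [Metric.mem_ball, dist_eq_norm]
    have hn : ‖z - (z + x)‖ = ‖x‖ := by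
      rw [show z - (z + x) = -x by ring, norm_neg]
    show (Metric.ball z 1).indicator (fun ζ => ENNReal.ofReal (1 / ‖z - ζ‖)) (z + x) = _
    by_cases hx : x ∈ Metric.ball (0:ℂ) 1
    · rw [Set.indicator_of_mem (hm.2 hx), Set.indicator_of_mem hx, hn]
    · rw [Set.indicator_of_notMem (fun h => hx (hm.1 h)), Set.indicator_of_notMem hx]
  rw [step1]
  simp only [step2]
  rw [← my_complex_lintegral_comp_polarCoord_symm]
  set rect : Set (ℝ × ℝ) := Ioo (0:ℝ) 1 ×ˢ Ioo (-Real.pi) Real.pi with hrect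
  have hbound : ∀ p ∈ polarCoord.target,
      ENNReal.ofReal p.1 * (Metric.ball (0:ℂ) 1).indicator
        (fun x => ENNReal.ofReal (1 / ‖x‖)) (Complex.polarCoord.symm p)
      ≤ rect.indicator (fun _ => (1:ENNReal)) p := by
    rintro ⟨r, θ⟩ ⟨hr, hθ⟩
    simp only [mem_Ioi] at hr
    have habs : ‖Complex.polarCoord.symm (r, θ)‖ = r := by
      rw [Complex.norm_polarCoord_symm, abs_of_pos hr]
    by_cases hlt : r < 1
    · have hmem : Complex.polarCoord.symm (r, θ) ∈ Metric.ball (0:ℂ) 1 := by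
        rw [Metric.mem_ball, dist_zero_right, habs]; exact hlt
      rw [Set.indicator_of_mem hmem, Set.indicator_of_mem (by exact ⟨⟨hr, hlt⟩, hθ⟩), habs,
        ← ENNReal.ofReal_mul hr.le]
      rw [mul_one_div, div_self hr.ne']
      simp
    · have hmem : Complex.polarCoord.symm (r, θ) ∉ Metric.ball (0:ℂ) 1 := by
        rw [Metric.mem_ball, dist_zero_right, habs]; exact hlt
      rw [Set.indicator_of_notMem hmem]
      simp
  calc (∫⁻ p in polarCoord.target, ENNReal.ofReal p.1 * (Metric.ball (0:ℂ) 1).indicator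
        (fun x => ENNReal.ofReal (1 / ‖x‖)) (Complex.polarCoord.symm p))
      ≤ ∫⁻ p in polarCoord.target, rect.indicator (fun _ => (1:ENNReal)) p :=
        setLIntegral_mono' polarCoord.open_target.measurableSet hbound
    _ ≤ ∫⁻ p, rect.indicator (fun _ => (1:ENNReal)) p :=
        lintegral_mono' Measure.restrict_le_self le_rfl
    _ = volume rect := lintegral_indicator_one (measurableSet_Ioo.prod measurableSet_Ioo)
    _ < ⊤ := by
        rw [hrect, Measure.volume_eq_prod, Measure.prod_prod, Real.volume_Ioo, Real.volume_Ioo]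
        exact ENNReal.mul_lt_top ENNReal.ofReal_lt_top ENNReal.ofReal_lt_top

theorem near_bound (g v : ℂ → ℂ) (z : ℂ) (S Tv : ℝ) (hS0 : 0 ≤ S) (hTv0 : 0 ≤ Tv)
    (hS : ∀ ζ ∈ Metric.ball z 1, ‖g ζ‖ ≤ S)
    (hTv : ∀ ζ ∈ Metric.ball z 1, ‖v ζ‖ ≤ Tv) :
    (∫⁻ ζ in Metric.ball z 1, ENNReal.ofReal (‖Jint v z g ζ‖))
      ≤ ENNReal.ofReal (S * Tv) * ∫⁻ ζ in Metric.ball z 1, ENNReal.ofReal (1 / ‖z - ζ‖) := by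
  rw [← lintegral_const_mul' _ _ ENNReal.ofReal_ne_top]
  refine setLIntegral_mono' Metric.isOpen_ball.measurableSet fun ζ hζ => ?_
  rw [Jint_norm, ← ENNReal.ofReal_mul (by positivity)]
  apply ENNReal.ofReal_le_ofReal
  have h1 : ‖g ζ‖ * ‖v ζ‖ * rho ζ ≤ S * Tv := by
    calc ‖g ζ‖ * ‖v ζ‖ * rho ζ ≤ ‖g ζ‖ * ‖v ζ‖ * 1 := by
          have := rho_pos ζ
          have h := mul_le_mul_of_nonneg_left (rho_le_one ζ) (by positivity : 0 ≤ ‖g ζ‖ * ‖v ζ‖)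
          linarith
      _ = ‖g ζ‖ * ‖v ζ‖ := mul_one _
      _ ≤ S * Tv := mul_le_mul (hS ζ hζ) (hTv ζ hζ) (norm_nonneg _) hS0
  calc ‖g ζ‖ * ‖v ζ‖ / ‖z - ζ‖ * rho ζ = ‖g ζ‖ * ‖v ζ‖ * rho ζ * ‖z - ζ‖⁻¹ := by ring
    _ ≤ S * Tv * ‖z - ζ‖⁻¹ := mul_le_mul_of_nonneg_right h1 (by positivity)
    _ = S * Tv * (1 / ‖z - ζ‖) := by rw [one_div]

theorem Jint_lintegral_le (g v : ℂ → ℂ) (hg : Differentiable ℂ g) (hv : Differentiable ℂ v)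
    (hMg : fockNormSq g ≠ ⊤) (hMv : fockNormSq v ≠ ⊤) (z : ℂ) :
    (∫⁻ ζ, ENNReal.ofReal (‖Jint v z g ζ‖))
      ≤ ENNReal.ofReal ((Real.sqrt (Real.exp (Real.pi * (‖z‖ + 2) ^ 2) / Real.pi)) ^ 2
            * Real.sqrt (fockNormSq g).toReal * Real.sqrt (fockNormSq v).toReal)
          * (∫⁻ ζ in Metric.ball z 1, ENNReal.ofReal (1 / ‖z - ζ‖))
        + fockNormSq g ^ ((1:ℝ)/2) * fockNormSq v ^ ((1:ℝ)/2) := by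
  set K := Real.sqrt (Real.exp (Real.pi * (‖z‖ + 2) ^ 2) / Real.pi) with hK
  have hK0 : 0 ≤ K := Real.sqrt_nonneg _
  rw [← lintegral_add_compl (fun ζ => ENNReal.ofReal (‖Jint v z g ζ‖))
    (Metric.isOpen_ball.measurableSet (s := Metric.ball z 1))]
  apply add_le_add
  · have hSg : ∀ ζ ∈ Metric.ball z 1, ‖g ζ‖ ≤ K * Real.sqrt (fockNormSq g).toReal :=
      fun ζ hζ => my_eval_ball g hg z hMg ζ (Metric.ball_subset_closedBall hζ)
    have hSv : ∀ ζ ∈ Metric.ball z 1, ‖v ζ‖ ≤ K * Real.sqrt (fockNormSq v).toReal :=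
      fun ζ hζ => my_eval_ball v hv z hMv ζ (Metric.ball_subset_closedBall hζ)
    have := near_bound g v z _ _ (by positivity) (by positivity) hSg hSv
    refine this.trans (le_of_eq ?_)
    congr 2
    ring
  · exact far_bound g v hg.continuous hv.continuous z

theorem Jint_integrable (g v : ℂ → ℂ) (hg : Differentiable ℂ g) (hv : Differentiable ℂ v)
    (hMg : fockNormSq g ≠ ⊤) (hMv : fockNormSq v ≠ ⊤) (z : ℂ) :
    Integrable (Jint v z g) := by
  refine ⟨Jint_aesm v hv.continuous z g hg.continuous, ?_⟩
  rw [hasFiniteIntegral_iff_norm]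
  refine lt_of_le_of_lt (Jint_lintegral_le g v hg hv hMg hMv z) ?_
  apply ENNReal.add_lt_top.2
  constructor
  · exact ENNReal.mul_lt_top ENNReal.ofReal_lt_top (kernel_lint z)
  · exact ENNReal.mul_lt_top (ENNReal.rpow_lt_top_of_nonneg (by norm_num) hMg)
      (ENNReal.rpow_lt_top_of_nonneg (by norm_num) hMv)

theorem Jint_norm_integral_le (g v : ℂ → ℂ) (hg : Differentiable ℂ g) (hv : Differentiable ℂ v)
    (hMg : fockNormSq g ≠ ⊤) (hMv : fockNormSq v ≠ ⊤) (z : ℂ) (δ : ℝ) (hδ : 0 ≤ δ)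
    (hle : fockNormSq g ≤ ENNReal.ofReal (δ ^ 2)) :
    ‖∫ ζ, Jint v z g ζ‖
      ≤ ((Real.sqrt (Real.exp (Real.pi * (‖z‖ + 2) ^ 2) / Real.pi)) ^ 2
            * Real.sqrt (fockNormSq v).toReal
            * (∫⁻ ζ in Metric.ball z 1, ENNReal.ofReal (1 / ‖z - ζ‖)).toReal
          + Real.sqrt (fockNormSq v).toReal) * δ := by
  set K := Real.sqrt (Real.exp (Real.pi * (‖z‖ + 2) ^ 2) / Real.pi) with hK
  have hK0 : 0 ≤ K := Real.sqrt_nonneg _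
  set ck := ∫⁻ ζ in Metric.ball z 1, ENNReal.ofReal (1 / ‖z - ζ‖) with hck
  have hckfin : ck ≠ ⊤ := (kernel_lint z).ne
  have hsggle : Real.sqrt (fockNormSq g).toReal ≤ δ := by
    have h1 : (fockNormSq g).toReal ≤ δ ^ 2 := by
      have := ENNReal.toReal_mono (by simp) hle
      simpa [ENNReal.toReal_ofReal (sq_nonneg δ)] using this
    calc Real.sqrt (fockNormSq g).toReal ≤ Real.sqrt (δ ^ 2) := Real.sqrt_le_sqrt h1
      _ = δ := Real.sqrt_sq hδ
  have hrpow : fockNormSq g ^ ((1:ℝ)/2) ≤ ENNReal.ofReal δ := by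
    calc fockNormSq g ^ ((1:ℝ)/2) ≤ (ENNReal.ofReal (δ ^ 2)) ^ ((1:ℝ)/2) :=
          ENNReal.rpow_le_rpow hle (by norm_num)
      _ = ENNReal.ofReal δ := by
          rw [← Real.rpow_natCast δ 2,
            ← ENNReal.ofReal_rpow_of_nonneg hδ (by norm_num : (0:ℝ) ≤ ((2:ℕ):ℝ)),
            ← ENNReal.rpow_mul]
          norm_num
  have hbound := Jint_lintegral_le g v hg hv hMg hMv z
  set BigE := ENNReal.ofReal (K ^ 2 * δ * Real.sqrt (fockNormSq v).toReal) * ck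
      + ENNReal.ofReal δ * fockNormSq v ^ ((1:ℝ)/2) with hBigE
  have hbound2 : (∫⁻ ζ, ENNReal.ofReal (‖Jint v z g ζ‖)) ≤ BigE := by
    refine hbound.trans (add_le_add ?_ ?_)
    · apply mul_le_mul_left
      apply ENNReal.ofReal_le_ofReal
      have := mul_le_mul_of_nonneg_right hsggle (Real.sqrt_nonneg (fockNormSq v).toReal)
      calc K ^ 2 * Real.sqrt (fockNormSq g).toReal * Real.sqrt (fockNormSq v).toReal
          ≤ K ^ 2 * (δ * Real.sqrt (fockNormSq v).toReal) := by nlinarith [sq_nonneg K]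
        _ = K ^ 2 * δ * Real.sqrt (fockNormSq v).toReal := by ring
    · exact mul_le_mul_left hrpow _
  have hBigEfin : BigE ≠ ⊤ := by
    rw [hBigE]
    apply ENNReal.add_ne_top.2
    constructor
    · exact (ENNReal.mul_lt_top ENNReal.ofReal_lt_top (kernel_lint z)).ne
    · exact (ENNReal.mul_lt_top ENNReal.ofReal_lt_top
        (ENNReal.rpow_lt_top_of_nonneg (by norm_num) hMv)).ne
  calc ‖∫ ζ, Jint v z g ζ‖ ≤ (∫⁻ ζ, ENNReal.ofReal (‖Jint v z g ζ‖)).toReal :=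
        norm_integral_le_lintegral_norm _
    _ ≤ BigE.toReal := ENNReal.toReal_mono hBigEfin hbound2
    _ = K ^ 2 * δ * Real.sqrt (fockNormSq v).toReal * ck.toReal
          + δ * Real.sqrt (fockNormSq v).toReal := by
        rw [hBigE, ENNReal.toReal_add, ENNReal.toReal_mul, ENNReal.toReal_mul,
          ENNReal.toReal_ofReal (by positivity), ENNReal.toReal_ofReal hδ]
        · congr 1
          rw [← ENNReal.toReal_rpow, ← Real.sqrt_eq_rpow]
        · exact (ENNReal.mul_lt_top ENNReal.ofReal_lt_top (kernel_lint z)).ne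
        · exact (ENNReal.mul_lt_top ENNReal.ofReal_lt_top
            (ENNReal.rpow_lt_top_of_nonneg (by norm_num) hMv)).ne
    _ = (K ^ 2 * Real.sqrt (fockNormSq v).toReal * ck.toReal
          + Real.sqrt (fockNormSq v).toReal) * δ := by ring

theorem exists_good_radius (F : ℂ → ℂ) (hF : Differentiable ℂ F) (hFne : ∃ w, F w ≠ 0) (z : ℂ) :
    ∃ r : ℝ, 0 < r ∧ r ≤ 1 ∧ ∀ ζ ∈ Metric.sphere z r, F ζ ≠ 0 := by
  by_contra hcon
  push_neg at hcon
  choose! ζfun hζs hζz using hcon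
  set Z := {ζ : ℂ | ζ ∈ Metric.closedBall z 1 ∧ F ζ = 0} with hZ
  have hZsub : Z ⊆ Metric.closedBall z 1 := fun ζ h => h.1
  have himg : MapsTo ζfun (Ioc (0:ℝ) 1) Z := by
    rintro r ⟨hr0, hr1⟩
    have h1 := hζs r hr0 hr1
    have h2 := hζz r hr0 hr1
    refine ⟨?_, h2⟩
    rw [Metric.mem_closedBall]
    rw [Metric.mem_sphere] at h1
    rw [h1]
    exact hr1
  have hinj : InjOn ζfun (Ioc (0:ℝ) 1) := by
    rintro r ⟨hr0, hr1⟩ s ⟨hs0, hs1⟩ heq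
    have h1 := hζs r hr0 hr1
    have h2 := hζs s hs0 hs1
    rw [Metric.mem_sphere] at h1 h2
    rw [← h1, ← h2, heq]
  have hZinf : Z.Infinite := by
    have hIoc : (Ioc (0:ℝ) 1).Infinite := Set.Ioc_infinite zero_lt_one
    exact ((hIoc.image hinj).mono (image_subset_iff.2 himg))
  obtain ⟨x, hxK, hacc⟩ :=
    hZinf.exists_accPt_of_subset_isCompact (isCompact_closedBall z 1) hZsub
  have hfreq : ∃ᶠ y in nhdsWithin x {x}ᶜ, F y = 0 := by
    have h := accPt_iff_frequently.1 hacc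
    rw [frequently_nhdsWithin_iff]
    exact h.mono fun y hy => ⟨hy.2.2, hy.1⟩
  have hzero : EqOn F 0 univ := by
    exact AnalyticOnNhd.eqOn_zero_of_preconnected_of_frequently_eq_zero
      (analyticOnNhd_univ_iff_differentiable.2 hF) isPreconnected_univ (mem_univ x) hfreq
  obtain ⟨w, hw⟩ := hFne
  exact hw (hzero (mem_univ w))

theorem center_bound (f : ℂ → ℂ) (hf : Differentiable ℂ f) (z : ℂ) (r : ℝ) (hr : 0 < r)
    (C : ℝ) (hC : ∀ ζ ∈ Metric.sphere z r, ‖f ζ‖ ≤ C) : ‖f z‖ ≤ C := by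
  apply Complex.norm_le_of_forall_mem_frontier_norm_le (Metric.isBounded_ball (x := z) (r := r))
    (hf.diffContOnCl)
  · intro w hw
    rw [frontier_ball z hr.ne'] at hw
    exact hC w hw
  · exact subset_closure (Metric.mem_ball_self hr)

end MyHelpers

end
theorem orthogonality_integral_identity (F H W : ℂ → ℂ) (hF : MemFock0 F)
    (hH2 : MemE2' H) (hHcrg : CRG H)
    (hind : ∃ c : ℝ, 0 < c ∧ ∀ θ ∈ Set.Icc (0 : ℝ) (2 * Real.pi), c ≤ indicator2 H θ)
    (hsimple : ∀ z : ℂ, H z = 0 → deriv H z ≠ 0)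
    (hdisj : ∀ z : ℂ, ¬(F z = 0 ∧ H z = 0))
    (hFH : InPolyClosure F (fun z => F z * H z))
    (hW : Differentiable ℂ W) (hFW : MemFock fun z => F z * W z)
    (horth : ∀ p : Polynomial ℂ,
      fockInner (fun z => p.eval z * F z) (fun z => F z * W z) = 0) :
    ∀ z : ℂ,
      H z * ∫ ζ : ℂ, F ζ * (starRingEnd ℂ) (F ζ * W ζ) / (z - ζ) *
          (Real.exp (-Real.pi * ‖ζ‖ ^ 2) : ℝ)
      = ∫ ζ : ℂ, F ζ * H ζ * (starRingEnd ℂ) (F ζ * W ζ) / (z - ζ) *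
          (Real.exp (-Real.pi * ‖ζ‖ ^ 2) : ℝ) := by
  intro z
  obtain ⟨α, hHdiff, -⟩ := hH2
  have hFdiff := hF.1
  by_cases hFall : ∀ ζ : ℂ, F ζ = 0
  · simp [hFall]
  have hFne : ∃ w, F w ≠ 0 := by
    push_neg at hFall
    exact hFall
  set v : ℂ → ℂ := fun ζ => F ζ * W ζ with hv
  have hvdiff : Differentiable ℂ v := hFdiff.mul hW
  have hMv : fockNormSq v ≠ ⊤ := hFW.2.ne
  have hMF : fockNormSq F ≠ ⊤ := by
    have h1 := (hF.2 1).2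
    have he : (fun z => Polynomial.eval z (1 : Polynomial ℂ) * F z) = F := by
      funext ζ; simp
    rw [he] at h1
    exact h1.ne
  have hMFH : fockNormSq (fun ζ => F ζ * H ζ) ≠ ⊤ := hFH.1.2.ne
  have hFHdiff : Differentiable ℂ (fun ζ => F ζ * H ζ) := hFdiff.mul hHdiff
  have hintF : Integrable (Jint v z F) := Jint_integrable F v hFdiff hvdiff hMF hMv z
  have hintFH : Integrable (Jint v z (fun ζ => F ζ * H ζ)) :=
    Jint_integrable _ v hFHdiff hvdiff hMFH hMv z
  have hgoal1 : (∫ ζ : ℂ, F ζ * (starRingEnd ℂ) (F ζ * W ζ) / (z - ζ) *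
      (Real.exp (-Real.pi * ‖ζ‖ ^ 2) : ℝ)) = ∫ ζ, Jint v z F ζ := rfl
  have hgoal2 : (∫ ζ : ℂ, F ζ * H ζ * (starRingEnd ℂ) (F ζ * W ζ) / (z - ζ) *
      (Real.exp (-Real.pi * ‖ζ‖ ^ 2) : ℝ)) = ∫ ζ, Jint v z (fun ζ => F ζ * H ζ) ζ := rfl
  rw [hgoal1, hgoal2]
  suffices hT : (∫ ζ, Jint v z (fun ζ => F ζ * H ζ) ζ) - H z * (∫ ζ, Jint v z F ζ) = 0 by
    exact (sub_eq_zero.1 hT).symm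
  -- good radius and minimum on the sphere
  obtain ⟨r, hr0, hr1, hrF⟩ := exists_good_radius F hFdiff hFne z
  obtain ⟨ζm, hζm, hmin⟩ := (isCompact_sphere z r).exists_isMinOn
    (NormedSpace.sphere_nonempty.2 hr0.le) (hFdiff.continuous.norm.continuousOn)
  set m : ℝ := ‖F ζm‖ with hm
  have hm0 : 0 < m := norm_pos_iff.2 (hrF ζm hζm)
  set Kz : ℝ := Real.sqrt (Real.exp (Real.pi * (‖z‖ + 2) ^ 2) / Real.pi) with hKz
  have hKz0 : 0 ≤ Kz := Real.sqrt_nonneg _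
  set sv : ℝ := Real.sqrt (fockNormSq v).toReal with hsv
  have hsv0 : 0 ≤ sv := Real.sqrt_nonneg _
  set ckR : ℝ := (∫⁻ ζ in Metric.ball z 1, ENNReal.ofReal (1 / ‖z - ζ‖)).toReal with hckR
  have hckR0 : 0 ≤ ckR := ENNReal.toReal_nonneg
  set CJ : ℝ := Kz ^ 2 * sv * ckR + sv with hCJ
  have hCJ0 : 0 ≤ CJ := by positivity
  set CF : ℝ := ‖∫ ζ, Jint v z F ζ‖ with hCF
  have hCF0 : 0 ≤ CF := norm_nonneg _
  set D : ℝ := CJ + Kz * CF / m with hD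
  have hD0 : 0 ≤ D := by positivity
  set T : ℂ := (∫ ζ, Jint v z (fun ζ => F ζ * H ζ) ζ) - H z * (∫ ζ, Jint v z F ζ) with hTdef
  have key : ∀ n : ℕ, ‖T‖ ≤ D * (1 / ((n : ℝ) + 1)) := by
    intro n
    set ε : ℝ := 1 / ((n : ℝ) + 1) with hε
    have hε0 : 0 < ε := by positivity
    obtain ⟨p, hp⟩ := hFH.2 ε hε0
    set u : ℂ → ℂ := fun ζ => p.eval ζ * F ζ - F ζ * H ζ with hu
    have hule : fockNormSq u ≤ ENNReal.ofReal (ε ^ 2) := le_of_lt (by simpa [hu] using hp)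
    have hudiff : Differentiable ℂ u := (p.differentiable.mul hFdiff).sub (hFdiff.mul hHdiff)
    have hMu : fockNormSq u ≠ ⊤ :=
      (lt_of_le_of_lt hule ENNReal.ofReal_lt_top).ne
    have hintu : Integrable (Jint v z u) := Jint_integrable u v hudiff hvdiff hMu hMv z
    have hintpF : Integrable (Jint v z (fun ζ => p.eval ζ * F ζ)) :=
      Jint_integrable _ v (hF.2 p).1 hvdiff (hF.2 p).2.ne hMv z
    obtain ⟨q, hq⟩ := Polynomial.X_sub_C_dvd_sub_C_eval (a := z) (p := p)
    have hqeval : ∀ ζ : ℂ, p.eval ζ - p.eval z = (ζ - z) * q.eval ζ := by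
      intro ζ
      have h1 := congrArg (Polynomial.eval ζ) hq
      simpa using h1
    -- orthogonality for q
    set A : ℂ → ℂ := fun ζ => (q.eval ζ * F ζ) * (starRingEnd ℂ) (v ζ)
      * ((Real.exp (-Real.pi * ‖ζ‖ ^ 2) : ℝ) : ℂ) with hA
    have hA0 : (∫ ζ, A ζ) = 0 := horth q
    have hAeq : ∀ᵐ ζ ∂(volume : Measure ℂ), A ζ
        = -(Jint v z (fun ζ => p.eval ζ * F ζ) ζ) + (p.eval z) • Jint v z F ζ := by
      filter_upwards [compl_mem_ae_iff.2 (measure_singleton z)] with ζ hζ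
      have hζne : ζ ≠ z := hζ
      have hzζ : z - ζ ≠ 0 := sub_ne_zero.2 (Ne.symm hζne)
      have h3 : Polynomial.eval z p - Polynomial.eval ζ p = (z - ζ) * q.eval ζ := by
        linear_combination -(hqeval ζ)
      have h4 : -(Jint v z (fun ζ => p.eval ζ * F ζ) ζ) + (p.eval z) • Jint v z F ζ
          = ((Polynomial.eval z p - Polynomial.eval ζ p) / (z - ζ))
            * (F ζ * (starRingEnd ℂ) (v ζ) * ((rho ζ : ℝ) : ℂ)) := by
        simp only [Jint, smul_eq_mul]
        field_simp
        ring
      rw [h4, h3, mul_div_cancel_left₀ _ hzζ]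
      simp only [hA, rho]
      ring
    have hAint : (∫ ζ, A ζ)
        = -(∫ ζ, Jint v z (fun ζ => p.eval ζ * F ζ) ζ) + p.eval z • ∫ ζ, Jint v z F ζ := by
      have hneg : Integrable (fun ζ => -(Jint v z (fun ζ => p.eval ζ * F ζ) ζ)) volume :=
        hintpF.neg
      have hsm : Integrable (fun ζ => (p.eval z) • Jint v z F ζ) volume := by
        exact hintF.smul (Polynomial.eval z p)
      rw [integral_congr_ae hAeq, integral_add hneg hsm, integral_neg, integral_smul]
    have hpFeq : (∫ ζ, Jint v z (fun ζ => p.eval ζ * F ζ) ζ)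
        = p.eval z * ∫ ζ, Jint v z F ζ := by
      have h3 := hAint
      rw [hA0] at h3
      rw [smul_eq_mul] at h3
      linear_combination h3
    have hsplit : (∫ ζ, Jint v z u ζ)
        = (∫ ζ, Jint v z (fun ζ => p.eval ζ * F ζ) ζ)
          - ∫ ζ, Jint v z (fun ζ => F ζ * H ζ) ζ := by
      rw [← integral_sub hintpF hintFH]
      congr 1
      funext ζ
      simp only [Jint, hu]
      ring
    have hTdecomp : T = -(∫ ζ, Jint v z u ζ)
        + (p.eval z - H z) * (∫ ζ, Jint v z F ζ) := by
      rw [hTdef]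
      linear_combination hsplit + hpFeq
    -- bound on the u-term
    have hJu : ‖∫ ζ, Jint v z u ζ‖ ≤ CJ * ε := by
      have := Jint_norm_integral_le u v hudiff hvdiff hMu hMv z ε hε0.le hule
      simpa [hCJ, hKz, hsv, hckR] using this
    -- bound on (p z - H z)
    have hsupe : Real.sqrt (fockNormSq u).toReal ≤ ε := by
      have h1 : (fockNormSq u).toReal ≤ ε ^ 2 := by
        have := ENNReal.toReal_mono (by simp) hule
        simpa [ENNReal.toReal_ofReal (sq_nonneg ε)] using this
      calc Real.sqrt (fockNormSq u).toReal ≤ Real.sqrt (ε ^ 2) := Real.sqrt_le_sqrt h1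
        _ = ε := Real.sqrt_sq hε0.le
    have hsup : ∀ w ∈ Metric.sphere z r, ‖p.eval w - H w‖ ≤ Kz * ε / m := by
      intro w hw
      have hwball : w ∈ Metric.closedBall z 1 := by
        rw [Metric.mem_closedBall]
        rw [Metric.mem_sphere] at hw
        rw [hw]
        exact hr1
      have hev : ‖u w‖ ≤ Kz * ε := by
        have h1 := my_eval_ball u hudiff z hMu w hwball
        calc ‖u w‖ ≤ Kz * Real.sqrt (fockNormSq u).toReal := h1
          _ ≤ Kz * ε := mul_le_mul_of_nonneg_left hsupe hKz0
      have hFw : m ≤ ‖F w‖ := hmin hw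
      have huw : ‖u w‖ = ‖p.eval w - H w‖ * ‖F w‖ := by
        rw [← norm_mul]
        congr 1
        simp only [hu]
        ring
      rw [le_div_iff₀ hm0]
      calc ‖p.eval w - H w‖ * m ≤ ‖p.eval w - H w‖ * ‖F w‖ :=
            mul_le_mul_of_nonneg_left hFw (norm_nonneg _)
        _ = ‖u w‖ := huw.symm
        _ ≤ Kz * ε := hev
    have hcenter : ‖p.eval z - H z‖ ≤ Kz * ε / m :=
      center_bound (fun ζ => p.eval ζ - H ζ) (p.differentiable.sub hHdiff) z r hr0 _ hsup
    -- total
    calc ‖T‖ = ‖-(∫ ζ, Jint v z u ζ) + (p.eval z - H z) * (∫ ζ, Jint v z F ζ)‖ := by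
          rw [hTdecomp]
      _ ≤ ‖∫ ζ, Jint v z u ζ‖ + ‖p.eval z - H z‖ * CF := by
          refine (norm_add_le _ _).trans ?_
          rw [norm_neg, norm_mul]
      _ ≤ CJ * ε + (Kz * ε / m) * CF := by
          apply add_le_add hJu
          exact mul_le_mul_of_nonneg_right hcenter hCF0
      _ = D * ε := by rw [hD]; ring
      _ = D * (1 / ((n : ℝ) + 1)) := by rw [hε]
  have htend : Tendsto (fun n : ℕ => D * (1 / ((n : ℝ) + 1))) atTop (nhds 0) := by
    have h1 : Tendsto (fun n : ℕ => 1 / ((n : ℝ) + 1)) atTop (nhds 0) :=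
      tendsto_one_div_add_atTop_nhds_zero_nat
    simpa using h1.const_mul D
  have hT0 : ‖T‖ ≤ 0 := ge_of_tendsto' htend key
  exact norm_le_zero_iff.1 hT0
end
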